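/- arXiv:2009.14121 — 3 statements merged into one kernel-verified Lean document; each statement's English description precedes it below -/
import Mathlib

section
/- Let G : ℕ → ℂ be multiplicative with only finitely many bad primes, and suppose that the series S_G(1) = Σ_{q=1}^∞ G(q)·μ(q) converges. Then the following four conditions are equivalent: (1) R_G(a) converges for every a ∈ ℕ; (2) R_G(a) converges for every divisor a of N(G); (3) S_G(N(G)) converges; (4) S_G(b) converges for every b ∈ ℕ not divisible by any hyperbad prime of G. -/
open Filter Finset

noncomputable def mu (n : ℕ) : ℂ := ((ArithmeticFunction.moebius n : ℤ) : ℂ)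

/-- Ramanujan sum `c_q(a) = ∑_{d ∣ gcd(q,a)} d · μ(q/d)` (Kluyver's formula). -/
noncomputable def cR (q a : ℕ) : ℂ :=
  ∑ d ∈ (Nat.gcd q a).divisors, (d : ℂ) * mu (q / d)

/-- Partial sum of the Ramanujan series `R_G(a,x) = ∑_{q ≤ x} G(q) c_q(a)`. -/
noncomputable def RS (G : ℕ → ℂ) (a : ℕ) (x : ℝ) : ℂ :=
  ∑ q ∈ Finset.Icc 1 ⌊x⌋₊, G q * cR q a

/-- Partial sum of the coprime series `S_G(a,x) = ∑_{r ≤ x, (r,a)=1} G(r) μ(r)`. -/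
noncomputable def SS (G : ℕ → ℂ) (a : ℕ) (x : ℝ) : ℂ :=
  ∑ r ∈ (Finset.Icc 1 ⌊x⌋₊).filter fun r => Nat.gcd r a = 1, G r * mu r

/-- Partial sum of the Lucht series `L_G(d,x) = ∑_{K ≤ x} μ(K) G(dK)`. -/
noncomputable def LS (G : ℕ → ℂ) (d : ℕ) (x : ℝ) : ℂ :=
  ∑ K ∈ Finset.Icc 1 ⌊x⌋₊, mu K * G (d * K)

def RTendsto (G : ℕ → ℂ) (a : ℕ) (L : ℂ) : Prop :=
  Tendsto (fun x : ℝ => RS G a x) atTop (nhds L)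

def RConv (G : ℕ → ℂ) (a : ℕ) : Prop := ∃ L, RTendsto G a L

def STendsto (G : ℕ → ℂ) (a : ℕ) (L : ℂ) : Prop :=
  Tendsto (fun x : ℝ => SS G a x) atTop (nhds L)

def SConv (G : ℕ → ℂ) (a : ℕ) : Prop := ∃ L, STendsto G a L

def LTendsto (G : ℕ → ℂ) (d : ℕ) (L : ℂ) : Prop :=
  Tendsto (fun x : ℝ => LS G d x) atTop (nhds L)

def LConv (G : ℕ → ℂ) (d : ℕ) : Prop := ∃ L, LTendsto G d L

/-- `G` is multiplicative: `G(ab) = G(a)G(b)` for coprime positive `a, b`. -/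
def IsMult (G : ℕ → ℂ) : Prop :=
  ∀ a b : ℕ, 0 < a → 0 < b → Nat.Coprime a b → G (a * b) = G a * G b

/-- `G` is completely multiplicative. -/
def IsCM (G : ℕ → ℂ) : Prop :=
  ∀ a b : ℕ, 0 < a → 0 < b → G (a * b) = G a * G b

/-- The completely multiplicative index `w_{p,G}`: the largest `w ∈ ℕ` with
`G(p^k) = G(p)^k` for all `1 ≤ k ≤ w`, and `⊤` if this holds for all `k`. -/
noncomputable def cmIndex (G : ℕ → ℂ) (p : ℕ) : ℕ∞ :=
  ⨆ w ∈ {n : ℕ | ∀ k : ℕ, 1 ≤ k → k ≤ n → G (p ^ k) = G p ^ k}, (w : ℕ∞)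

/-- The transparency index `v_{p,G}`: least `K ≥ 0` with `G(p^{K+1}) ≠ 1`, or `⊤`. -/
noncomputable def trIdx (G : ℕ → ℂ) (p : ℕ) : ℕ∞ :=
  ⨅ K ∈ {K : ℕ | G (p ^ (K + 1)) ≠ 1}, (K : ℕ∞)

/-- A prime `p` is bad for `G` iff `1 ≤ |G(p)| ≤ p`. -/
def IsBad (G : ℕ → ℂ) (p : ℕ) : Prop :=
  1 ≤ ‖G p‖ ∧ ‖G p‖ ≤ p

def IsHyperbad (G : ℕ → ℂ) (p : ℕ) : Prop :=
  p.Prime ∧ IsBad G p ∧ cmIndex G p = ⊤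

def IsSimplyBad (G : ℕ → ℂ) (p : ℕ) : Prop :=
  p.Prime ∧ IsBad G p ∧ cmIndex G p ≠ ⊤

def IsSimplyTransparent (G : ℕ → ℂ) (p : ℕ) : Prop :=
  p.Prime ∧ G p = 1 ∧ cmIndex G p ≠ ⊤

/-- The Ramanujan conductor `N(G) = ∏_{p simply bad} p^{w_{p,G}}`. -/
noncomputable def ramCond (G : ℕ → ℂ) : ℕ :=
  ∏ᶠ p ∈ {p : ℕ | IsSimplyBad G p}, p ^ (cmIndex G p).toNat

/-- The transparency conductor `N_T(G) = ∏_{p simply transparent} p^{v_{p,G}}`. -/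
noncomputable def transpCond (G : ℕ → ℂ) : ℕ :=
  ∏ᶠ p ∈ {p : ℕ | IsSimplyTransparent G p}, p ^ (trIdx G p).toNat

/-- The squarefree radical of `n`. -/
def rad (n : ℕ) : ℕ := ∏ p ∈ n.primeFactors, p

/-- Euler–Ramanujan factor `E_G(a) = ∑_{d ∣ a·rad a} G(d) c_d(a)`. -/
noncomputable def EG (G : ℕ → ℂ) (a : ℕ) : ℂ := ∑ d ∈ (a * rad a).divisors, G d * cR d a

/-- `C_G(a) = ∑_{d ∣ a} G(d) μ(d)`. -/
noncomputable def CGsum (G : ℕ → ℂ) (a : ℕ) : ℂ := ∑ d ∈ a.divisors, G d * mu d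

/-- `D_G(a) = ∑_{d ∣ a} G(d) d`. -/
noncomputable def DGsum (G : ℕ → ℂ) (a : ℕ) : ℂ := ∑ d ∈ a.divisors, G d * (d : ℂ)

/-- `U_G(a) = ∑_{d ∣ a} μ(d) G(da)`. -/
noncomputable def UGsum (G : ℕ → ℂ) (a : ℕ) : ℂ := ∑ d ∈ a.divisors, mu d * G (d * a)

/-- Eratosthenes transform `F' = F ∗ μ`. -/
noncomputable def eratos (F : ℕ → ℂ) (n : ℕ) : ℂ := ∑ d ∈ n.divisors, F d * mu (n / d)

/-- The canonical Ramanujan coefficient of `F`: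
`G_F(q) = ∏_{p ∣ q} (1 - ∑_{K=0}^{v_p(q)-1} F'(p^K)/p^K)`. -/
noncomputable def canonCoeff (F : ℕ → ℂ) (q : ℕ) : ℂ :=
  ∏ p ∈ q.primeFactors,
    (1 - ∑ K ∈ Finset.range (q.factorization p), eratos F (p ^ K) / ((p : ℂ) ^ K))

/-- The opacity core `H_G(q) = G(q·N_T(G))·μ(q)²`. -/
noncomputable def opacityCore (G : ℕ → ℂ) (q : ℕ) : ℂ :=
  G (q * transpCond G) * mu q ^ 2

noncomputable def LP (G : ℕ → ℂ) (d P : ℕ) (y : ℝ) : ℂ :=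
  ∑ K ∈ (Finset.Icc 1 ⌊y⌋₊).filter fun K => Nat.gcd K P = 1, mu K * G (d * K)

def LPConv (G : ℕ → ℂ) (d P : ℕ) : Prop :=
  ∃ L, Tendsto (fun y : ℝ => LP G d P y) atTop (nhds L)

lemma mu_prime_mul {p m : ℕ} (hp : p.Prime) (hpm : ¬ p ∣ m) : mu (p * m) = -mu m := by
  unfold mu
  rw [ArithmeticFunction.isMultiplicative_moebius.map_mul_of_coprime
      ((Nat.Prime.coprime_iff_not_dvd hp).mpr hpm), ArithmeticFunction.moebius_apply_prime hp]
  push_cast; ring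

lemma mu_prime_mul_self {p m : ℕ} (hp : p.Prime) (hpm : p ∣ m) : mu (p * m) = 0 := by
  unfold mu
  rw [ArithmeticFunction.moebius_eq_zero_of_not_squarefree]
  · simp
  intro hsq
  exact hp.one_lt.ne' (Nat.isUnit_iff.mp (hsq p (mul_dvd_mul_left p hpm)))

lemma LP_floor (G : ℕ → ℂ) (d P : ℕ) (y : ℝ) : LP G d P y = LP G d P (⌊y⌋₊ : ℝ) := by
  simp [LP]

lemma LP_eq_zero {G : ℕ → ℂ} {d P : ℕ} {y : ℝ} (h : y < 1) : LP G d P y = 0 := by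
  have : ⌊y⌋₊ = 0 := Nat.floor_eq_zero.mpr h
  simp [LP, this]

lemma gcd_mul_iff {p P : ℕ} (hp : p.Prime) (hpP : ¬ p ∣ P) (K : ℕ) :
    Nat.gcd K (p * P) = 1 ↔ (Nat.gcd K P = 1 ∧ ¬ p ∣ K) := by
  constructor
  · intro h
    have h' : Nat.Coprime K (p * P) := h
    rw [Nat.coprime_mul_iff_right] at h'
    refine ⟨h'.2, fun hd => hp.one_lt.ne' ?_⟩
    have : p ∣ Nat.gcd K p := Nat.dvd_gcd hd dvd_rfl
    rw [Nat.Coprime] at h'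
    rw [h'.1] at this
    exact Nat.eq_one_of_dvd_one this
  · rintro ⟨h1, h2⟩
    have : Nat.Coprime K p := Nat.Coprime.symm ((Nat.Prime.coprime_iff_not_dvd hp).mpr h2)
    exact Nat.coprime_mul_iff_right.mpr ⟨this, h1⟩

/-- E1 : split the summation variable at a prime `p` not dividing `P`. -/
lemma LP_split {G : ℕ → ℂ} {p P : ℕ} (hp : p.Prime) (hpP : ¬ p ∣ P) (d : ℕ) (y : ℝ) :
    LP G d P y = LP G d (p * P) y - LP G (d * p) (p * P) (y / p) := by
  classical
  have hfl : ⌊y / (p : ℝ)⌋₊ = ⌊y⌋₊ / p := Nat.floor_div_natCast y p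
  have hsplit :
      LP G d P y
        = (∑ K ∈ ((Finset.Icc 1 ⌊y⌋₊).filter fun K => Nat.gcd K P = 1).filter (fun K => ¬ p ∣ K),
            mu K * G (d * K))
          + ∑ K ∈ ((Finset.Icc 1 ⌊y⌋₊).filter fun K => Nat.gcd K P = 1).filter (fun K => p ∣ K),
            mu K * G (d * K) := by
    rw [LP, ← Finset.sum_filter_add_sum_filter_not
      ((Finset.Icc 1 ⌊y⌋₊).filter fun K => Nat.gcd K P = 1) (fun K => p ∣ K)]
    exact add_comm _ _
  have h1 : ((Finset.Icc 1 ⌊y⌋₊).filter fun K => Nat.gcd K P = 1).filter (fun K => ¬ p ∣ K)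
      = (Finset.Icc 1 ⌊y⌋₊).filter fun K => Nat.gcd K (p * P) = 1 := by
    rw [Finset.filter_filter]
    exact Finset.filter_congr fun K _ => by rw [gcd_mul_iff hp hpP K]; try tauto
  have h2 : ∑ K ∈ ((Finset.Icc 1 ⌊y⌋₊).filter fun K => Nat.gcd K P = 1).filter (fun K => p ∣ K),
      mu K * G (d * K)
      = ∑ m ∈ (Finset.Icc 1 (⌊y⌋₊ / p)).filter fun m => Nat.gcd m P = 1,
          mu (p * m) * G (d * (p * m)) := by
    refine Finset.sum_nbij' (fun K => K / p) (fun m => p * m) ?_ ?_ ?_ ?_ ?_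
    · intro K hK
      simp only [Finset.mem_filter, Finset.mem_Icc] at hK ⊢
      obtain ⟨⟨⟨hK1, hK2⟩, hKP⟩, hpK⟩ := hK
      refine ⟨⟨?_, ?_⟩, ?_⟩
      · exact (Nat.one_le_div_iff hp.pos).mpr (Nat.le_of_dvd (by omega) hpK)
      · exact Nat.div_le_div_right hK2
      · exact Nat.Coprime.coprime_dvd_left (Nat.div_dvd_of_dvd hpK) hKP
    · intro m hm
      simp only [Finset.mem_filter, Finset.mem_Icc] at hm ⊢
      obtain ⟨⟨hm1, hm2⟩, hmP⟩ := hm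
      refine ⟨⟨⟨Nat.mul_pos hp.pos hm1, ?_⟩, ?_⟩, Dvd.intro m rfl⟩
      · rw [mul_comm]
        exact (Nat.le_div_iff_mul_le hp.pos).mp hm2
      · exact Nat.coprime_mul_iff_left.mpr ⟨(Nat.Prime.coprime_iff_not_dvd hp).mpr hpP, hmP⟩
    · intro K hK
      simp only [Finset.mem_filter] at hK
      exact Nat.mul_div_cancel' hK.2
    · intro m _
      exact Nat.mul_div_cancel_left m hp.pos
    · intro K hK
      simp only [Finset.mem_filter] at hK
      rw [Nat.mul_div_cancel' hK.2]
  have h3 : ∑ m ∈ (Finset.Icc 1 (⌊y⌋₊ / p)).filter fun m => Nat.gcd m P = 1,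
        mu (p * m) * G (d * (p * m))
      = - LP G (d * p) (p * P) (y / p) := by
    rw [LP, hfl]
    rw [← Finset.sum_filter_add_sum_filter_not
      ((Finset.Icc 1 (⌊y⌋₊/p)).filter fun m => Nat.gcd m P = 1) (fun m => p ∣ m)
      (fun m => mu (p * m) * G (d * (p * m)))]
    have hz : ∑ m ∈ ((Finset.Icc 1 (⌊y⌋₊/p)).filter fun m => Nat.gcd m P = 1).filter (fun m => p ∣ m),
        mu (p * m) * G (d * (p * m)) = 0 := by
      refine Finset.sum_eq_zero fun m hm => ?_
      simp only [Finset.mem_filter] at hm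
      rw [mu_prime_mul_self hp hm.2, zero_mul]
    have hfe : ((Finset.Icc 1 (⌊y⌋₊/p)).filter fun m => Nat.gcd m P = 1).filter (fun m => ¬ p ∣ m)
        = (Finset.Icc 1 (⌊y⌋₊/p)).filter fun m => Nat.gcd m (p * P) = 1 := by
      rw [Finset.filter_filter]
      exact Finset.filter_congr fun m _ => by rw [gcd_mul_iff hp hpP m]; try tauto
    rw [hz, zero_add, hfe, ← Finset.sum_neg_distrib]
    refine Finset.sum_congr rfl fun m hm => ?_
    simp only [Finset.mem_filter] at hm
    have hpm : ¬ p ∣ m := ((gcd_mul_iff hp hpP m).mp hm.2).2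
    rw [mu_prime_mul hp hpm, ← mul_assoc]
    ring
  rw [hsplit, h1, h2, h3]
  unfold LP
  ring

/-- E2 : pull a prime power out of `G` when summation avoids `p`. -/
lemma LP_pow_mul {G : ℕ → ℂ} (hG : IsMult G) {p d : ℕ} (hp : p.Prime) (hd : 0 < d)
    (hpd : ¬ p ∣ d) (j P : ℕ) (z : ℝ) :
    LP G (d * p ^ j) (p * P) z = G (p ^ j) * LP G d (p * P) z := by
  rw [LP, LP, Finset.mul_sum]
  refine Finset.sum_congr rfl fun K hK => ?_
  simp only [Finset.mem_filter, Finset.mem_Icc] at hK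
  have hKp : Nat.Coprime p K := ((Nat.coprime_mul_iff_right.mp hK.2).1).symm
  have hco : Nat.Coprime (p ^ j) (d * K) :=
    Nat.Coprime.pow_left j (Nat.Coprime.mul_right ((hp.coprime_iff_not_dvd).mpr hpd) hKp)
  have h1 : d * p ^ j * K = p ^ j * (d * K) := by ring
  rw [h1, hG (p ^ j) (d * K) (pow_pos hp.pos j) (Nat.mul_pos hd hK.1.1) hco]
  ring

lemma LP_one_step {G : ℕ → ℂ} (hG : IsMult G) {p d₀ P : ℕ} (hp : p.Prime) (hd : 0 < d₀)
    (hpd : ¬ p ∣ d₀) (hpP : ¬ p ∣ P) (y : ℝ) :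
    LP G d₀ P y = LP G d₀ (p * P) y - G p * LP G d₀ (p * P) (y / p) := by
  rw [LP_split hp hpP d₀ y]
  congr 1
  have h := LP_pow_mul hG hp hd hpd 1 P (y / p)
  rw [pow_one] at h
  rw [← h]

lemma LP_two_step {G : ℕ → ℂ} (hG : IsMult G) {p d₀ P : ℕ} (hp : p.Prime) (hd : 0 < d₀)
    (hpd : ¬ p ∣ d₀) (hpP : ¬ p ∣ P) (e : ℕ) (y : ℝ) :
    LP G (p ^ e * d₀) P y
      = G (p ^ e) * LP G d₀ (p * P) y - G (p ^ (e + 1)) * LP G d₀ (p * P) (y / p) := by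
  rw [mul_comm (p ^ e) d₀, LP_split hp hpP (d₀ * p ^ e) y, LP_pow_mul hG hp hd hpd e P y,
    mul_assoc, ← pow_succ, LP_pow_mul hG hp hd hpd (e + 1) P (y / p)]

lemma LP_hyper_collapse {G : ℕ → ℂ} (hG : IsMult G) {p d₀ P : ℕ} (hp : p.Prime) (hd : 0 < d₀)
    (hpd : ¬ p ∣ d₀) (hpP : ¬ p ∣ P) (hcm : ∀ k, 1 ≤ k → G (p ^ k) = G p ^ k)
    {e : ℕ} (he : 1 ≤ e) (y : ℝ) :
    LP G (p ^ e * d₀) P y = G (p ^ e) * LP G d₀ P y := by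
  rw [LP_two_step hG hp hd hpd hpP e y, LP_one_step hG hp hd hpd hpP y,
    hcm (e + 1) (by omega), hcm e he, pow_succ]
  ring

lemma tendsto_comp_div {F : ℝ → ℂ} {L : ℂ} {c : ℝ} (hc : 0 < c)
    (h : Tendsto F atTop (nhds L)) : Tendsto (fun y : ℝ => F (y / c)) atTop (nhds L) :=
  h.comp (tendsto_id.atTop_div_const hc)

lemma tendsto_of_comp_div {F : ℝ → ℂ} {L : ℂ} {c : ℝ} (hc : 0 < c)
    (h : Tendsto (fun y : ℝ => F (y / c)) atTop (nhds L)) : Tendsto F atTop (nhds L) := by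
  have h2 := h.comp (tendsto_id.atTop_mul_const hc)
  refine h2.congr fun y => ?_
  simp only [Function.comp, id]
  rw [mul_div_cancel_right₀ _ hc.ne']

lemma not_prime_dvd_one {p : ℕ} (hp : p.Prime) : ¬ p ∣ 1 :=
  fun h => hp.one_lt.ne' (Nat.eq_one_of_dvd_one h)

lemma LPConv_strip {G : ℕ → ℂ} (hG : IsMult G) {p P : ℕ} (hp : p.Prime) (hpP : ¬ p ∣ P)
    (h : LPConv G 1 (p * P)) : LPConv G 1 P := by
  obtain ⟨L, hL⟩ := h
  refine ⟨L - G p * L, ?_⟩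
  have h2 := (tendsto_comp_div (c := (p:ℝ)) (by exact_mod_cast hp.pos) hL).const_mul (G p)
  refine (hL.sub h2).congr fun y => ?_
  exact (LP_one_step hG hp one_pos (not_prime_dvd_one hp) hpP y).symm

lemma LPConv_extract {G : ℕ → ℂ} (hG : IsMult G) {p d₀ P w : ℕ} (hp : p.Prime) (hd : 0 < d₀)
    (hpd : ¬ p ∣ d₀) (hpP : ¬ p ∣ P) (hw : 1 ≤ w) (hGw : G (p ^ w) = G p ^ w)
    (hne : G (p ^ (w + 1)) ≠ G p ^ (w + 1))
    (h0 : LPConv G d₀ P) (hw' : LPConv G (p ^ w * d₀) P) : LPConv G d₀ (p * P) := by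
  obtain ⟨L0, hL0⟩ := h0
  obtain ⟨Lw, hLw⟩ := hw'
  set c : ℂ := G (p ^ (w + 1)) - G (p ^ w) * G p with hc
  have hcne : c ≠ 0 := by
    rw [hc, hGw, ← pow_succ]
    exact sub_ne_zero.mpr hne
  have key : ∀ y : ℝ, LP G d₀ (p * P) (y / p)
      = c⁻¹ * (G (p ^ w) * LP G d₀ P y - LP G (p ^ w * d₀) P y) := by
    intro y
    rw [LP_two_step hG hp hd hpd hpP w y, LP_one_step hG hp hd hpd hpP y]
    field_simp
    ring
  have ht : Tendsto (fun y : ℝ => LP G d₀ (p * P) (y / p)) atTop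
      (nhds (c⁻¹ * (G (p ^ w) * L0 - Lw))) := by
    have h3 := ((hL0.const_mul (G (p ^ w))).sub hLw).const_mul c⁻¹
    exact h3.congr fun y => (key y).symm
  exact ⟨_, tendsto_of_comp_div (c := (p:ℝ)) (by exact_mod_cast hp.pos) ht⟩

/-- Lemma A : `R_G(a,x) = ∑_{d ∣ a} d ⬝ L_G(d, x/d)` . -/
lemma RS_eq_sum {G : ℕ → ℂ} {a : ℕ} (ha : 0 < a) (x : ℝ) :
    RS G a x = ∑ d ∈ a.divisors, (d : ℂ) * LP G d 1 (x / d) := by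
  rw [RS]
  have step1 : ∀ q ∈ Finset.Icc 1 ⌊x⌋₊, G q * cR q a
      = ∑ d ∈ a.divisors, if d ∣ q then (d : ℂ) * (mu (q / d) * G q) else 0 := by
    intro q _
    have hdiv : (Nat.gcd q a).divisors = a.divisors.filter (· ∣ q) := by
      ext d
      simp only [Nat.mem_divisors, Finset.mem_filter]
      constructor
      · rintro ⟨hd, _⟩
        exact ⟨⟨(Nat.dvd_gcd_iff.mp hd).2, ha.ne'⟩, (Nat.dvd_gcd_iff.mp hd).1⟩
      · rintro ⟨⟨hda, _⟩, hdq⟩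
        exact ⟨Nat.dvd_gcd hdq hda, fun h => ha.ne' (Nat.eq_zero_of_gcd_eq_zero_right h)⟩
    rw [cR, hdiv, Finset.mul_sum, Finset.sum_filter]
    refine Finset.sum_congr rfl fun d _ => ?_
    split_ifs
    · ring
    · rfl
  rw [Finset.sum_congr rfl step1, Finset.sum_comm]
  refine Finset.sum_congr rfl fun d hd => ?_
  obtain ⟨hda, hane⟩ := Nat.mem_divisors.mp hd
  have hdpos : 0 < d := Nat.pos_of_dvd_of_pos hda ha
  rw [← Finset.sum_filter]
  have hLP : LP G d 1 (x / d) = ∑ m ∈ Finset.Icc 1 (⌊x⌋₊ / d), mu m * G (d * m) := by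
    rw [LP, Nat.floor_div_natCast, Finset.filter_true_of_mem]
    intro m _
    exact Nat.gcd_one_right m
  rw [hLP, Finset.mul_sum]
  refine Finset.sum_nbij' (fun q => q / d) (fun m => d * m) ?_ ?_ ?_ ?_ ?_
  · intro q hq
    simp only [Finset.mem_filter, Finset.mem_Icc] at hq ⊢
    obtain ⟨⟨hq1, hq2⟩, hdq⟩ := hq
    exact ⟨(Nat.one_le_div_iff hdpos).mpr (Nat.le_of_dvd (by omega) hdq),
      Nat.div_le_div_right hq2⟩
  · intro m hm
    simp only [Finset.mem_filter, Finset.mem_Icc] at hm ⊢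
    obtain ⟨hm1, hm2⟩ := hm
    refine ⟨⟨Nat.mul_pos hdpos hm1, ?_⟩, Dvd.intro m rfl⟩
    rw [mul_comm]
    exact (Nat.le_div_iff_mul_le hdpos).mp hm2
  · intro q hq
    simp only [Finset.mem_filter] at hq
    exact Nat.mul_div_cancel' hq.2
  · intro m _
    exact Nat.mul_div_cancel_left m hdpos
  · intro q hq
    simp only [Finset.mem_filter] at hq
    rw [Nat.mul_div_cancel' hq.2]

lemma RConv_of_LPConv {G : ℕ → ℂ} {a : ℕ} (ha : 0 < a)
    (h : ∀ d ∈ a.divisors, LPConv G d 1) : RConv G a := by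
  choose L hL using h
  refine ⟨∑ d ∈ a.divisors.attach, (d.1 : ℂ) * L d.1 d.2, ?_⟩
  have ht : Tendsto
      (fun x : ℝ => ∑ d ∈ a.divisors.attach, (d.1 : ℂ) * LP G d.1 1 (x / d.1)) atTop
      (nhds (∑ d ∈ a.divisors.attach, (d.1 : ℂ) * L d.1 d.2)) := by
    refine tendsto_finset_sum _ fun d _ => ?_
    have hdpos : (0 : ℝ) < d.1 := by
      exact_mod_cast Nat.pos_of_mem_divisors d.2
    exact (tendsto_comp_div (c := (d.1 : ℝ)) hdpos (hL d.1 d.2)).const_mul _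
  refine ht.congr fun x => ?_
  rw [RS_eq_sum ha x, ← Finset.sum_attach (a.divisors) (fun d => (d : ℂ) * LP G d 1 (x / d))]

lemma LPConv_of_RConv {G : ℕ → ℂ} : ∀ d : ℕ, 0 < d → (∀ a, a ∣ d → RConv G a) → LPConv G d 1 := by
  intro d
  induction d using Nat.strong_induction_on with
  | _ d IH =>
    intro hd hR
    obtain ⟨L, hL⟩ := hR d dvd_rfl
    have hprop : ∀ d' ∈ d.divisors.erase d, LPConv G d' 1 := by
      intro d' hd'
      obtain ⟨hne, hmem⟩ := Finset.mem_erase.mp hd'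
      obtain ⟨hdvd, _⟩ := Nat.mem_divisors.mp hmem
      exact IH d' (lt_of_le_of_ne (Nat.le_of_dvd hd hdvd) hne) (Nat.pos_of_dvd_of_pos hdvd hd)
        (fun a ha => hR a (ha.trans hdvd))
    choose L' hL' using hprop
    have hsum : Tendsto
        (fun x : ℝ => ∑ d' ∈ (d.divisors.erase d).attach, (d'.1 : ℂ) * LP G d'.1 1 (x / d'.1))
        atTop (nhds (∑ d' ∈ (d.divisors.erase d).attach, (d'.1 : ℂ) * L' d'.1 d'.2)) := by
      refine tendsto_finset_sum _ fun d' _ => ?_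
      have hdpos : (0 : ℝ) < d'.1 := by
        exact_mod_cast Nat.pos_of_mem_divisors (Finset.mem_of_mem_erase d'.2)
      exact (tendsto_comp_div (c := (d'.1 : ℝ)) hdpos (hL' d'.1 d'.2)).const_mul _
    have hmain : Tendsto (fun x : ℝ => (d : ℂ) * LP G d 1 (x / d)) atTop
        (nhds (L - ∑ d' ∈ (d.divisors.erase d).attach, (d'.1 : ℂ) * L' d'.1 d'.2)) := by
      refine (hL.sub hsum).congr fun x => ?_
      rw [RS_eq_sum hd x]
      rw [Finset.sum_attach (d.divisors.erase d) (fun t => (t : ℂ) * LP G t 1 (x / t))]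
      rw [← Finset.sum_erase_add d.divisors _ (Nat.mem_divisors_self d hd.ne')]
      ring
    have h2 : Tendsto (fun x : ℝ => LP G d 1 (x / d)) atTop
        (nhds ((d : ℂ)⁻¹ * (L - ∑ d' ∈ (d.divisors.erase d).attach, (d'.1 : ℂ) * L' d'.1 d'.2))) := by
      refine (hmain.const_mul ((d : ℂ)⁻¹)).congr fun x => ?_
      rw [← mul_assoc, inv_mul_cancel₀ (by exact_mod_cast hd.ne' : (d : ℂ) ≠ 0), one_mul]
    exact ⟨_, tendsto_of_comp_div (c := (d : ℝ)) (by exact_mod_cast hd) h2⟩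

lemma bdd_of_tendsto {G : ℕ → ℂ} {d P : ℕ} {L : ℂ}
    (h : Tendsto (fun y : ℝ => LP G d P y) atTop (nhds L)) :
    ∃ C : ℝ, 0 ≤ C ∧ ∀ y : ℝ, ‖LP G d P y‖ ≤ C := by
  have hseq : Tendsto (fun n : ℕ => ‖LP G d P n‖) atTop (nhds ‖L‖) :=
    (h.comp tendsto_natCast_atTop_atTop).norm
  obtain ⟨C, hC⟩ := hseq.bddAbove_range
  refine ⟨C, le_trans (norm_nonneg _) (hC (Set.mem_range_self 0)), fun y => ?_⟩
  rw [LP_floor]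
  exact hC (Set.mem_range_self _)

/-- M3 : a non-bad prime can be added to the coprimality modulus. -/
lemma LPConv_add_good {G : ℕ → ℂ} (hG : IsMult G) {p P : ℕ} (hp : p.Prime)
    (hbad : ¬ (1 ≤ ‖G p‖ ∧ ‖G p‖ ≤ p)) (hpP : ¬ p ∣ P)
    {C₀ : ℝ} (hC₀ : ∀ K : ℕ, ‖mu K * G (1 * K)‖ ≤ C₀)
    (h : LPConv G 1 P) : LPConv G 1 (p * P) := by
  obtain ⟨L, hL⟩ := h
  set c : ℂ := G p with hcdef
  set f : ℝ → ℂ := fun y => LP G 1 P y with hf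
  set g : ℝ → ℂ := fun y => LP G 1 (p * P) y with hg
  have hppos : (0 : ℝ) < p := by exact_mod_cast hp.pos
  have hrec : ∀ y : ℝ, g y = f y + c * g (y / p) := by
    intro y
    have h1 := LP_one_step hG hp one_pos (not_prime_dvd_one hp) hpP (P := P) y
    show LP G 1 (p * P) y = LP G 1 P y + G p * LP G 1 (p * P) (y / p)
    rw [h1]; ring
  obtain ⟨C, hC0, hCb⟩ := bdd_of_tendsto hL
  have hC0nn : 0 ≤ C₀ := le_trans (norm_nonneg _) (hC₀ 0)
  have hcases : ‖c‖ < 1 ∨ (p : ℝ) < ‖c‖ := by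
    rw [hcdef]
    by_cases h1 : 1 ≤ ‖G p‖
    · right; by_contra h2; push_neg at h2; exact hbad ⟨h1, h2⟩
    · left; linarith [not_le.mp h1]
  rcases hcases with hlt | hgt
  · -- case |G p| < 1 : downward unrolling
    have hzero : ∀ (j : ℕ) (y : ℝ), y < (p : ℝ) ^ j → f (y / (p : ℝ) ^ j) = 0 := by
      intro j y hy
      exact LP_eq_zero ((div_lt_one (pow_pos hppos j)).mpr hy)
    have hexact : ∀ (n : ℕ) (y : ℝ), ⌊y⌋₊ ≤ n →
        g y = ∑ j ∈ Finset.range (n + 1), c ^ j * f (y / (p : ℝ) ^ j) := by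
      intro n
      induction n with
      | zero =>
        intro y hy
        have hy1 : y < 1 := Nat.floor_eq_zero.mp (Nat.le_zero.mp hy)
        rw [Finset.sum_range_one, pow_zero, pow_zero, one_mul, div_one]
        show LP G 1 (p * P) y = LP G 1 P y
        rw [LP_eq_zero hy1, LP_eq_zero hy1]
      | succ n IHn =>
        intro y hy
        have hfl : ⌊y / (p : ℝ)⌋₊ = ⌊y⌋₊ / p := Nat.floor_div_natCast y p
        have hle : ⌊y / (p : ℝ)⌋₊ ≤ n := by
          rw [hfl]
          have h2 : ⌊y⌋₊ / p ≤ ⌊y⌋₊ / 2 := Nat.div_le_div_left hp.two_le (by norm_num)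
          have h3 : ⌊y⌋₊ / 2 ≤ (n + 1) / 2 := Nat.div_le_div_right hy
          omega
        rw [hrec y, IHn (y / p) hle, Finset.mul_sum,
          Finset.sum_range_succ' (fun j => c ^ j * f (y / (p : ℝ) ^ j)) (n + 1)]
        simp only [pow_zero, div_one, one_mul]
        rw [add_comm]
        congr 1
        refine Finset.sum_congr rfl fun j _ => ?_
        rw [div_div, ← pow_succ']
        ring
    have htsum : ∀ y : ℝ, g y = ∑' j : ℕ, c ^ j * f (y / (p : ℝ) ^ j) := by
      intro y
      rw [hexact ⌊y⌋₊ y le_rfl]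
      refine (tsum_eq_sum ?_).symm
      intro j hj
      simp only [Finset.mem_range, not_lt] at hj
      have hyp : y < (p : ℝ) ^ j := by
        have h1 : y < (⌊y⌋₊ : ℝ) + 1 := Nat.lt_floor_add_one y
        have h2 : ⌊y⌋₊ + 1 < p ^ j := by
          calc ⌊y⌋₊ + 1 ≤ j := hj
            _ < 2 ^ j := Nat.lt_two_pow_self
            _ ≤ p ^ j := Nat.pow_le_pow_left hp.two_le j
        calc y < (⌊y⌋₊ : ℝ) + 1 := h1
          _ ≤ (p : ℝ) ^ j := by exact_mod_cast h2.le
      rw [hzero j y hyp, mul_zero]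
    refine ⟨∑' j : ℕ, c ^ j * L, ?_⟩
    have hdom : Tendsto (fun y : ℝ => ∑' j : ℕ, c ^ j * f (y / (p : ℝ) ^ j)) atTop
        (nhds (∑' j : ℕ, c ^ j * L)) := by
      refine tendsto_tsum_of_dominated_convergence (bound := fun j : ℕ => ‖c‖ ^ j * C) ?_ ?_ ?_
      · exact (summable_geometric_of_norm_lt_one (by rwa [norm_norm])).mul_right C
      · intro j
        exact (tendsto_comp_div (c := (p : ℝ) ^ j) (pow_pos hppos j) hL).const_mul _
      · filter_upwards with y j
        rw [norm_mul, norm_pow]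
        exact mul_le_mul_of_nonneg_left (hCb _) (pow_nonneg (norm_nonneg c) j)
    exact hdom.congr fun y => (htsum y).symm
  · -- case |G p| > p : upward unrolling
    have hc1 : 1 < ‖c‖ := lt_trans (by exact_mod_cast hp.one_lt) hgt
    have hcne : c ≠ 0 := by
      intro h0; rw [h0, norm_zero] at hc1; linarith
    have hcinv : ‖c⁻¹‖ < 1 := by
      rw [norm_inv]; exact inv_lt_one_of_one_lt₀ hc1
    have hup : ∀ (J : ℕ) (y : ℝ),
        g y = -(∑ j ∈ Finset.range J, c⁻¹ ^ (j + 1) * f ((p : ℝ) ^ (j + 1) * y))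
          + c⁻¹ ^ J * g ((p : ℝ) ^ J * y) := by
      intro J
      induction J with
      | zero => intro y; simp
      | succ J IHJ =>
        intro y
        rw [IHJ y, Finset.sum_range_succ]
        have harg : ((p : ℝ) ^ (J + 1) * y) / p = (p : ℝ) ^ J * y := by
          rw [pow_succ']
          field_simp
        have hthis := hrec ((p : ℝ) ^ (J + 1) * y)
        rw [harg] at hthis
        rw [hthis]
        have hcc : c⁻¹ ^ (J + 1) * c = c⁻¹ ^ J := by
          rw [pow_succ, mul_assoc, inv_mul_cancel₀ hcne, mul_one]
        linear_combination (-(g ((p : ℝ) ^ J * y))) * hcc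
    have hgbound : ∀ z : ℝ, 0 ≤ z → ‖g z‖ ≤ C₀ * z := by
      intro z hz
      rw [hg]
      calc ‖LP G 1 (p * P) z‖
          ≤ ∑ K ∈ (Finset.Icc 1 ⌊z⌋₊).filter fun K => Nat.gcd K (p * P) = 1,
            ‖mu K * G (1 * K)‖ := norm_sum_le _ _
        _ ≤ ∑ _K ∈ (Finset.Icc 1 ⌊z⌋₊).filter fun K => Nat.gcd K (p * P) = 1, C₀ :=
            Finset.sum_le_sum fun K _ => hC₀ K
        _ = ((Finset.Icc 1 ⌊z⌋₊).filter fun K => Nat.gcd K (p * P) = 1).card * C₀ := by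
            rw [Finset.sum_const, nsmul_eq_mul]
        _ ≤ (⌊z⌋₊ : ℝ) * C₀ := by
            refine mul_le_mul_of_nonneg_right ?_ hC0nn
            have h1 : ((Finset.Icc 1 ⌊z⌋₊).filter fun K => Nat.gcd K (p * P) = 1).card ≤ ⌊z⌋₊ := by
              calc _ ≤ (Finset.Icc 1 ⌊z⌋₊).card := Finset.card_filter_le _ _
                _ = ⌊z⌋₊ := by rw [Nat.card_Icc]; omega
            exact_mod_cast h1
        _ ≤ C₀ * z := by
            rw [mul_comm]
            exact mul_le_mul_of_nonneg_left (Nat.floor_le hz) hC0nn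
    have htsumg : ∀ y : ℝ, 0 ≤ y →
        g y = -∑' j : ℕ, c⁻¹ ^ (j + 1) * f ((p : ℝ) ^ (j + 1) * y) := by
      intro y hy
      have hsumm : Summable (fun j : ℕ => c⁻¹ ^ (j + 1) * f ((p : ℝ) ^ (j + 1) * y)) := by
        refine Summable.of_norm_bounded (g := fun j => (‖c⁻¹‖ * C) * ‖c⁻¹‖ ^ j)
          (((summable_geometric_of_norm_lt_one (x := ‖c⁻¹‖) (by rwa [norm_norm])).mul_left (‖c⁻¹‖ * C))) ?_
        intro j
        rw [norm_mul, norm_pow, pow_succ', mul_assoc]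
        calc ‖c⁻¹‖ * (‖c⁻¹‖ ^ j * ‖f ((p : ℝ) ^ (j + 1) * y)‖)
            ≤ ‖c⁻¹‖ * (‖c⁻¹‖ ^ j * C) := by
              refine mul_le_mul_of_nonneg_left
                (mul_le_mul_of_nonneg_left (hCb _) (by positivity)) (norm_nonneg _)
          _ = ‖c⁻¹‖ * C * ‖c⁻¹‖ ^ j := by ring
      have hpartial := hsumm.hasSum.tendsto_sum_nat
      have hrem : Tendsto (fun J : ℕ => c⁻¹ ^ J * g ((p : ℝ) ^ J * y)) atTop (nhds 0) := by
        have hr0 : (0 : ℝ) ≤ (p : ℝ) * ‖c‖⁻¹ := by positivity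
        have hr1 : (p : ℝ) * ‖c‖⁻¹ < 1 := by
          rw [← div_eq_mul_inv]
          exact (div_lt_one (by linarith)).mpr hgt
        refine squeeze_zero_norm (a := fun J : ℕ => (C₀ * y) * ((p : ℝ) * ‖c‖⁻¹) ^ J)
          (fun J => ?_) ?_
        · show ‖c⁻¹ ^ J * g ((p : ℝ) ^ J * y)‖ ≤ (C₀ * y) * ((p : ℝ) * ‖c‖⁻¹) ^ J
          rw [norm_mul, norm_pow, norm_inv, mul_pow]
          have h1 : ‖g ((p : ℝ) ^ J * y)‖ ≤ C₀ * ((p : ℝ) ^ J * y) :=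
            hgbound _ (by positivity)
          calc ‖c‖⁻¹ ^ J * ‖g ((p : ℝ) ^ J * y)‖
              ≤ ‖c‖⁻¹ ^ J * (C₀ * ((p : ℝ) ^ J * y)) :=
                mul_le_mul_of_nonneg_left h1 (by positivity)
            _ = C₀ * y * ((p : ℝ) ^ J * ‖c‖⁻¹ ^ J) := by ring
        · have := (tendsto_pow_atTop_nhds_zero_of_lt_one hr0 hr1).const_mul (C₀ * y)
          simpa using this
      have hcombined : Tendsto
          (fun J : ℕ => -(∑ j ∈ Finset.range J, c⁻¹ ^ (j + 1) * f ((p : ℝ) ^ (j + 1) * y))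
            + c⁻¹ ^ J * g ((p : ℝ) ^ J * y)) atTop
          (nhds (-(∑' j : ℕ, c⁻¹ ^ (j + 1) * f ((p : ℝ) ^ (j + 1) * y)) + 0)) :=
        (hpartial.neg).add hrem
      have heq : (fun J : ℕ => -(∑ j ∈ Finset.range J, c⁻¹ ^ (j + 1) * f ((p : ℝ) ^ (j + 1) * y))
            + c⁻¹ ^ J * g ((p : ℝ) ^ J * y)) = fun _ : ℕ => g y :=
        funext fun J => (hup J y).symm
      rw [heq] at hcombined
      have := tendsto_nhds_unique tendsto_const_nhds hcombined
      rw [this, add_zero]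
    refine ⟨-∑' j : ℕ, c⁻¹ ^ (j + 1) * L, ?_⟩
    have hdom : Tendsto (fun y : ℝ => ∑' j : ℕ, c⁻¹ ^ (j + 1) * f ((p : ℝ) ^ (j + 1) * y)) atTop
        (nhds (∑' j : ℕ, c⁻¹ ^ (j + 1) * L)) := by
      refine tendsto_tsum_of_dominated_convergence (bound := fun j : ℕ => ‖c⁻¹‖ ^ (j + 1) * C)
        ?_ ?_ ?_
      · refine Summable.congr (f := fun j : ℕ => (‖c⁻¹‖ * C) * ‖c⁻¹‖ ^ j)
          (((summable_geometric_of_norm_lt_one (x := ‖c⁻¹‖) (by rwa [norm_norm])).mul_left (‖c⁻¹‖ * C))) ?_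
        intro j
        rw [pow_succ']
        ring
      · intro j
        exact (hL.comp (Tendsto.const_mul_atTop (pow_pos hppos (j + 1)) tendsto_id)).const_mul _
      · filter_upwards with y j
        rw [norm_mul, norm_pow]
        exact mul_le_mul_of_nonneg_left (hCb _) (pow_nonneg (norm_nonneg _) _)
    have hev : (fun y : ℝ => -∑' j : ℕ, c⁻¹ ^ (j + 1) * f ((p : ℝ) ^ (j + 1) * y)) =ᶠ[atTop] g := by
      filter_upwards [eventually_ge_atTop (0 : ℝ)] with y hy
      exact (htsumg y hy).symm
    exact Tendsto.congr' hev hdom.neg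

lemma SS_eq_LP (G : ℕ → ℂ) (a : ℕ) (x : ℝ) : SS G a x = LP G 1 a x := by
  unfold SS LP
  refine Finset.sum_congr rfl fun r _ => ?_
  rw [one_mul]; ring

lemma cmSet_mem_one (G : ℕ → ℂ) (p : ℕ) :
    (1 : ℕ) ∈ {n : ℕ | ∀ k : ℕ, 1 ≤ k → k ≤ n → G (p ^ k) = G p ^ k} := by
  intro k hk1 hk2
  have hk : k = 1 := le_antisymm hk2 hk1
  rw [hk, pow_one, pow_one]

lemma cmIndex_cm {G : ℕ → ℂ} {p : ℕ} (h : cmIndex G p = ⊤) :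
    ∀ k : ℕ, 1 ≤ k → G (p ^ k) = G p ^ k := by
  intro k hk
  by_contra hne
  have hb : ∀ n ∈ {n : ℕ | ∀ k : ℕ, 1 ≤ k → k ≤ n → G (p ^ k) = G p ^ k},
      (n : ℕ∞) ≤ ((k - 1 : ℕ) : ℕ∞) := by
    intro n hn
    have hnk : n ≤ k - 1 := by
      by_contra hgt
      push_neg at hgt
      exact hne (hn k hk (by omega))
    exact Nat.cast_le.mpr hnk
  have hle : cmIndex G p ≤ ((k - 1 : ℕ) : ℕ∞) := by
    rw [cmIndex]; exact iSup₂_le hb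
  rw [h] at hle
  exact ENat.coe_ne_top (k - 1) (top_le_iff.mp hle)

lemma cmIndex_spec {G : ℕ → ℂ} {p : ℕ} (h : cmIndex G p ≠ ⊤) :
    1 ≤ (cmIndex G p).toNat ∧ G (p ^ (cmIndex G p).toNat) = G p ^ (cmIndex G p).toNat ∧
      G (p ^ ((cmIndex G p).toNat + 1)) ≠ G p ^ ((cmIndex G p).toNat + 1) := by
  set w := (cmIndex G p).toNat with hwdef
  have hcoe : (w : ℕ∞) = cmIndex G p := ENat.coe_toNat h
  have hle1 : ((1 : ℕ) : ℕ∞) ≤ cmIndex G p := by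
    rw [cmIndex]
    exact le_iSup₂_of_le 1 (cmSet_mem_one G p) le_rfl
  have hw1 : 1 ≤ w := by
    rw [← hcoe] at hle1
    exact_mod_cast hle1
  have hmemw : w ∈ {n : ℕ | ∀ k : ℕ, 1 ≤ k → k ≤ n → G (p ^ k) = G p ^ k} := by
    by_contra hnw
    have hub : ∀ n ∈ {n : ℕ | ∀ k : ℕ, 1 ≤ k → k ≤ n → G (p ^ k) = G p ^ k},
        (n : ℕ∞) ≤ ((w - 1 : ℕ) : ℕ∞) := by
      intro n hn
      have hnn : n ≤ w - 1 := by
        by_contra hgt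
        push_neg at hgt
        exact hnw (fun k hk1 hk2 => hn k hk1 (by omega))
      exact Nat.cast_le.mpr hnn
    have hcontr : cmIndex G p ≤ ((w - 1 : ℕ) : ℕ∞) := by rw [cmIndex]; exact iSup₂_le hub
    rw [← hcoe] at hcontr
    have : w ≤ w - 1 := by exact_mod_cast hcontr
    omega
  refine ⟨hw1, hmemw w hw1 le_rfl, ?_⟩
  intro hcontra
  have hmem : (w + 1) ∈ {n : ℕ | ∀ k : ℕ, 1 ≤ k → k ≤ n → G (p ^ k) = G p ^ k} := by
    intro k hk1 hk2
    rcases Nat.lt_or_ge k (w + 1) with hlt | hge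
    · exact hmemw k hk1 (by omega)
    · have hk : k = w + 1 := by omega
      rw [hk]; exact hcontra
  have hge : ((w + 1 : ℕ) : ℕ∞) ≤ cmIndex G p := by
    rw [cmIndex]; exact le_iSup₂_of_le (w + 1) hmem le_rfl
  rw [← hcoe] at hge
  have : w + 1 ≤ w := by exact_mod_cast hge
  omega

lemma ramCond_eq {G : ℕ → ℂ} (hSB : {p : ℕ | IsSimplyBad G p}.Finite) :
    ramCond G = ∏ p ∈ hSB.toFinset, p ^ (cmIndex G p).toNat := by
  have hh := finprod_mem_coe_finset (fun p => p ^ (cmIndex G p).toNat) hSB.toFinset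
  rw [hSB.coe_toFinset] at hh
  rw [ramCond, ← hh]

lemma coprime_prod_primes_iff {K b : ℕ} (hb : 0 < b) :
    Nat.Coprime K b ↔ Nat.Coprime K (∏ p ∈ b.primeFactors, p) := by
  constructor
  · intro h
    rw [Nat.coprime_prod_right_iff]
    intro p hp
    exact Nat.Coprime.coprime_dvd_right (Nat.dvd_of_mem_primeFactors hp) h
  · intro h
    by_contra hc
    obtain ⟨q, hq, hqd⟩ := Nat.exists_prime_and_dvd (n := Nat.gcd K b) hc
    have hqK : q ∣ K := hqd.trans (Nat.gcd_dvd_left _ _)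
    have hqb : q ∣ b := hqd.trans (Nat.gcd_dvd_right _ _)
    have hmem : q ∈ b.primeFactors := Nat.mem_primeFactors.mpr ⟨hq, hqb, hb.ne'⟩
    have hcop := (Nat.coprime_prod_right_iff.mp h) q hmem
    exact (hq.coprime_iff_not_dvd.mp hcop.symm) hqK

lemma coprime_prod_pow_iff {K : ℕ} {s : Finset ℕ} {e : ℕ → ℕ} (he : ∀ p ∈ s, 1 ≤ e p) :
    Nat.Coprime K (∏ p ∈ s, p ^ e p) ↔ Nat.Coprime K (∏ p ∈ s, p) := by
  rw [Nat.coprime_prod_right_iff, Nat.coprime_prod_right_iff]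
  refine forall₂_congr fun p hp => ?_
  exact Nat.coprime_pow_right_iff (he p hp) K p

lemma LP_congr_P {G : ℕ → ℂ} {d P Q : ℕ} (h : ∀ K, Nat.Coprime K P ↔ Nat.Coprime K Q) (y : ℝ) :
    LP G d P y = LP G d Q y := by
  unfold LP
  congr 1
  exact Finset.filter_congr fun K _ => h K

/-- Claim Y : LP-convergence at arbitrary `d` against hyperbad-free moduli. -/
lemma claimY {G : ℕ → ℂ} (hG : IsMult G)
    (hgood : ∀ b : ℕ, 0 < b → (∀ p, IsHyperbad G p → ¬ p ∣ b) → LPConv G 1 b) :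
    ∀ d : ℕ, 0 < d → ∀ P : ℕ, 0 < P → Nat.Coprime d P →
      (∀ p, IsHyperbad G p → ¬ p ∣ P) → LPConv G d P := by
  intro d
  induction d using Nat.strong_induction_on with
  | _ d IH =>
    intro hd P hP hcop hhyp
    by_cases hd1 : d = 1
    · subst hd1
      exact hgood P hP hhyp
    · have hd2 : 1 < d := by omega
      set p := d.minFac with hpdef
      have hp : p.Prime := Nat.minFac_prime hd1
      have hpd : p ∣ d := Nat.minFac_dvd d
      set e := d.factorization p with hedef
      have he : 1 ≤ e := hp.factorization_pos_of_dvd (by omega) hpd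
      set d₀ := d / p ^ e with hd0def
      have hded : p ^ e * d₀ = d := Nat.ordProj_mul_ordCompl_eq_self d p
      have hpd₀ : ¬ p ∣ d₀ := Nat.not_dvd_ordCompl hp (by omega)
      have hd₀pos : 0 < d₀ := Nat.ordCompl_pos p (by omega)
      have hd₀lt : d₀ < d := Nat.div_lt_self hd (Nat.one_lt_pow (by omega) hp.one_lt)
      have hd₀dvd : d₀ ∣ d := Nat.ordCompl_dvd d p
      have hcop₀ : Nat.Coprime d₀ P := Nat.Coprime.coprime_dvd_left hd₀dvd hcop
      have hpP : ¬ p ∣ P := by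
        intro hPp
        have hdvd1 : p ∣ Nat.gcd d P := Nat.dvd_gcd hpd hPp
        rw [hcop] at hdvd1
        exact hp.one_lt.ne' (Nat.eq_one_of_dvd_one hdvd1)
      by_cases hH : IsHyperbad G p
      · have hcm : ∀ k, 1 ≤ k → G (p ^ k) = G p ^ k := cmIndex_cm hH.2.2
        obtain ⟨L0, hL0⟩ := IH d₀ hd₀lt hd₀pos P hP hcop₀ hhyp
        refine ⟨G (p ^ e) * L0, ?_⟩
        refine (hL0.const_mul _).congr fun y => ?_
        rw [← LP_hyper_collapse hG hp hd₀pos hpd₀ hpP hcm he y, hded]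
      · have hhyp' : ∀ q, IsHyperbad G q → ¬ q ∣ p * P := by
          intro q hq hqd
          rcases (Nat.Prime.dvd_mul hq.1).mp hqd with h1 | h2
          · exact hH (((Nat.prime_dvd_prime_iff_eq hq.1 hp).mp h1) ▸ hq)
          · exact hhyp q hq h2
        have hcopmul : Nat.Coprime d₀ (p * P) :=
          Nat.coprime_mul_iff_right.mpr ⟨((hp.coprime_iff_not_dvd).mpr hpd₀).symm, hcop₀⟩
        obtain ⟨A, hA⟩ := IH d₀ hd₀lt hd₀pos (p * P) (Nat.mul_pos hp.pos hP) hcopmul hhyp'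
        refine ⟨G (p ^ e) * A - G (p ^ (e + 1)) * A, ?_⟩
        have hA2 := tendsto_comp_div (c := (p : ℝ)) (by exact_mod_cast hp.pos) hA
        refine ((hA.const_mul (G (p ^ e))).sub (hA2.const_mul (G (p ^ (e + 1))))).congr
          fun y => ?_
        rw [← LP_two_step hG hp hd₀pos hpd₀ hpP e y, hded]

/-- **Finiteness convergence theorem** (Theorem 1.1). -/
theorem stmt_0 (G : ℕ → ℂ) (hG : IsMult G)
    (hfin : {p : ℕ | p.Prime ∧ IsBad G p}.Finite)
    (hconv1 : SConv G 1) :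
    List.TFAE
      [ ∀ a : ℕ, 0 < a → RConv G a,
        ∀ a : ℕ, a ∣ ramCond G → RConv G a,
        SConv G (ramCond G),
        ∀ b : ℕ, 0 < b → (∀ p : ℕ, IsHyperbad G p → ¬ p ∣ b) → SConv G b ] := by
  classical
  have hSB : {p : ℕ | IsSimplyBad G p}.Finite :=
    hfin.subset fun p hp => ⟨hp.1, hp.2.1⟩
  set SBf := hSB.toFinset with hSBfdef
  have hmemSBf : ∀ p, p ∈ SBf ↔ IsSimplyBad G p := fun p => hSB.mem_toFinset
  have hNeq : ramCond G = ∏ p ∈ SBf, p ^ (cmIndex G p).toNat := ramCond_eq hSB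
  have hprimeSBf : ∀ p ∈ SBf, p.Prime := fun p hp => ((hmemSBf p).mp hp).1
  have hwpos : ∀ p ∈ SBf, 1 ≤ (cmIndex G p).toNat := fun p hp =>
    (cmIndex_spec ((hmemSBf p).mp hp).2.2).1
  have hNpos : 0 < ramCond G := by
    rw [hNeq]; exact Finset.prod_pos fun p hp => pow_pos (hprimeSBf p hp).pos _
  have hSLP : ∀ a : ℕ, SConv G a ↔ LPConv G 1 a := by
    intro a
    constructor
    · rintro ⟨L, h⟩; exact ⟨L, h.congr fun x => SS_eq_LP G a x⟩
    · rintro ⟨L, h⟩; exact ⟨L, h.congr fun x => (SS_eq_LP G a x).symm⟩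
  -- term bound from hconv1
  obtain ⟨C₀, hC₀⟩ : ∃ C₀ : ℝ, ∀ K : ℕ, ‖mu K * G (1 * K)‖ ≤ C₀ := by
    obtain ⟨L1, hL1⟩ := hconv1
    have hLP1 : Tendsto (fun y : ℝ => LP G 1 1 y) atTop (nhds L1) :=
      Tendsto.congr (fun x => SS_eq_LP G 1 x) hL1
    have hseq : Tendsto (fun n : ℕ => LP G 1 1 (n : ℝ)) atTop (nhds L1) :=
      hLP1.comp tendsto_natCast_atTop_atTop
    have htriv : ∀ m : ℕ, (Finset.Icc 1 m).filter (fun K => Nat.gcd K 1 = 1) = Finset.Icc 1 m :=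
      fun m => Finset.filter_true_of_mem fun K _ => Nat.gcd_one_right K
    have hterm : ∀ n : ℕ, LP G 1 1 (((n + 1 : ℕ) : ℝ)) - LP G 1 1 ((n : ℕ) : ℝ)
        = mu (n + 1) * G (1 * (n + 1)) := by
      intro n
      rw [LP, LP, Nat.floor_natCast, Nat.floor_natCast, htriv, htriv,
        Finset.sum_Icc_succ_top (by omega)]
      ring
    have h0 : Tendsto (fun n : ℕ => mu (n + 1) * G (1 * (n + 1))) atTop (nhds 0) := by
      have hdiff := (hseq.comp (tendsto_add_atTop_nat 1)).sub hseq
      rw [sub_self] at hdiff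
      exact hdiff.congr fun n => hterm n
    obtain ⟨C, hC⟩ := (h0.norm).bddAbove_range
    have hC0 : 0 ≤ C := le_trans (norm_nonneg _) (hC (Set.mem_range_self 0))
    refine ⟨C, fun K => ?_⟩
    match K with
    | 0 => simpa [mu] using hC0
    | (n + 1) => exact hC (Set.mem_range_self n)
  tfae_have 1 → 2 := by
    intro h a ha
    exact h a (Nat.pos_of_dvd_of_pos ha hNpos)
  tfae_have 2 → 3 := by
    intro h2
    have hLPd : ∀ d, d ∣ ramCond G → LPConv G d 1 := fun d hd =>
      LPConv_of_RConv d (Nat.pos_of_dvd_of_pos hd hNpos) (fun a ha => h2 a (ha.trans hd))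
    have main : ∀ R : Finset ℕ, R ⊆ SBf →
        ∀ d, d ∣ (∏ p ∈ SBf \ R, p ^ (cmIndex G p).toNat) → LPConv G d (∏ p ∈ R, p) := by
      intro R
      induction R using Finset.induction_on with
      | empty =>
        intro _ d hd
        rw [Finset.sdiff_empty] at hd
        rw [Finset.prod_empty]
        exact hLPd d (by rw [hNeq]; exact hd)
      | @insert q R hq IH =>
        intro hsub d hd
        have hqSB : q ∈ SBf := hsub (Finset.mem_insert_self q R)
        have hRsub : R ⊆ SBf := fun x hx => hsub (Finset.mem_insert_of_mem hx)
        have hqpr : q.Prime := hprimeSBf q hqSB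
        obtain ⟨hw1, hGw, hGne⟩ := cmIndex_spec ((hmemSBf q).mp hqSB).2.2
        have hnotsub : q ∉ SBf \ insert q R := by
          simp [Finset.mem_sdiff]
        have hins : SBf \ R = insert q (SBf \ insert q R) := by
          ext a
          simp only [Finset.mem_sdiff, Finset.mem_insert]
          constructor
          · rintro ⟨ha, hnr⟩
            rcases eq_or_ne a q with rfl | hne
            · exact Or.inl rfl
            · exact Or.inr ⟨ha, fun h => hnr (h.resolve_left hne)⟩
          · rintro (rfl | ⟨ha, hni⟩)
            · exact ⟨hqSB, hq⟩
            · exact ⟨ha, fun h => hni (Or.inr h)⟩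
        have hprod : ∏ p ∈ SBf \ R, p ^ (cmIndex G p).toNat
            = q ^ (cmIndex G q).toNat * ∏ p ∈ SBf \ insert q R, p ^ (cmIndex G p).toNat := by
          rw [hins, Finset.prod_insert hnotsub]
        have h0 : LPConv G d (∏ p ∈ R, p) :=
          IH hRsub d (by rw [hprod]; exact hd.trans (dvd_mul_left _ _))
        have hw' : LPConv G (q ^ (cmIndex G q).toNat * d) (∏ p ∈ R, p) :=
          IH hRsub _ (by rw [hprod]; exact mul_dvd_mul_left _ hd)
        have hcopq : Nat.Coprime q (∏ p ∈ SBf \ insert q R, p ^ (cmIndex G p).toNat) := by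
          rw [Nat.coprime_prod_right_iff]
          intro p hp
          have hppr : p.Prime := hprimeSBf p (Finset.mem_sdiff.mp hp).1
          have hne : q ≠ p := by rintro rfl; exact hnotsub hp
          exact Nat.Coprime.pow_right _ ((Nat.coprime_primes hqpr hppr).mpr hne)
        have hqd : ¬ q ∣ d :=
          (hqpr.coprime_iff_not_dvd).mp (Nat.Coprime.coprime_dvd_right hd hcopq)
        have hqP : ¬ q ∣ ∏ p ∈ R, p := by
          have hcp : Nat.Coprime q (∏ p ∈ R, p) := by
            rw [Nat.coprime_prod_right_iff]
            intro p hp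
            exact (Nat.coprime_primes hqpr (hprimeSBf p (hRsub hp))).mpr
              (by rintro rfl; exact hq hp)
          exact (hqpr.coprime_iff_not_dvd).mp hcp
        have hdpos : 0 < d := Nat.pos_of_dvd_of_pos hd
          (Finset.prod_pos fun p hp => pow_pos (hprimeSBf p (Finset.mem_sdiff.mp hp).1).pos _)
        have hres := LPConv_extract hG hqpr hdpos hqd hqP hw1 hGw hGne h0 hw'
        rw [Finset.prod_insert hq]
        exact hres
    have hfinal := main SBf (Finset.Subset.refl SBf) 1 (one_dvd _)
    refine (hSLP _).mpr ?_
    obtain ⟨L, hL⟩ := hfinal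
    refine ⟨L, hL.congr fun y => ?_⟩
    refine LP_congr_P (fun K => ?_) y
    rw [hNeq]
    exact (coprime_prod_pow_iff hwpos).symm
  tfae_have 3 → 4 := by
    intro h3 b hb hbhyp
    have hstart : LPConv G 1 (∏ p ∈ SBf, p) := by
      obtain ⟨L, hL⟩ := (hSLP _).mp h3
      refine ⟨L, hL.congr fun y => ?_⟩
      refine LP_congr_P (fun K => ?_) y
      rw [hNeq]
      exact coprime_prod_pow_iff hwpos
    set S₁ := SBf ∩ b.primeFactors with hS₁def
    have hstrip : ∀ R : Finset ℕ, (∀ q ∈ R, q.Prime) → ∀ P : ℕ, (∀ q ∈ R, ¬ q ∣ P) →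
        LPConv G 1 ((∏ q ∈ R, q) * P) → LPConv G 1 P := by
      intro R
      induction R using Finset.induction_on with
      | empty =>
        intro _ P _ h
        rwa [Finset.prod_empty, one_mul] at h
      | @insert q R hq IH =>
        intro hpr P hnd h
        rw [Finset.prod_insert hq, mul_assoc] at h
        have hq' : q.Prime := hpr q (Finset.mem_insert_self q R)
        have hqnd : ¬ q ∣ (∏ r ∈ R, r) * P := by
          intro hdd
          rcases (Nat.Prime.dvd_mul hq').mp hdd with h1 | h2
          · have hcp : Nat.Coprime q (∏ r ∈ R, r) := by
              rw [Nat.coprime_prod_right_iff]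
              intro r hr
              exact (Nat.coprime_primes hq' (hpr r (Finset.mem_insert_of_mem hr))).mpr
                (by rintro rfl; exact hq hr)
            exact (hq'.coprime_iff_not_dvd).mp hcp h1
          · exact hnd q (Finset.mem_insert_self q R) h2
        exact IH (fun r hr => hpr r (Finset.mem_insert_of_mem hr)) P
          (fun r hr => hnd r (Finset.mem_insert_of_mem hr))
          (LPConv_strip hG hq' hqnd h)
    have hmid : LPConv G 1 (∏ q ∈ S₁, q) := by
      refine hstrip (SBf \ S₁) (fun q hq => hprimeSBf q (Finset.mem_sdiff.mp hq).1) _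
        (fun q hq hdd => ?_) ?_
      · have hqpr := hprimeSBf q (Finset.mem_sdiff.mp hq).1
        have hcp : Nat.Coprime q (∏ r ∈ S₁, r) := by
          rw [Nat.coprime_prod_right_iff]
          intro r hr
          exact (Nat.coprime_primes hqpr (hprimeSBf r (Finset.mem_inter.mp hr).1)).mpr
            (by rintro rfl; exact (Finset.mem_sdiff.mp hq).2 hr)
        exact (hqpr.coprime_iff_not_dvd).mp hcp hdd
      · rw [Finset.prod_sdiff Finset.inter_subset_left]
        exact hstart
    have hadd : ∀ A : Finset ℕ, (∀ q ∈ A, q.Prime ∧ ¬ IsBad G q) → ∀ P : ℕ,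
        (∀ q ∈ A, ¬ q ∣ P) → LPConv G 1 P → LPConv G 1 ((∏ q ∈ A, q) * P) := by
      intro A
      induction A using Finset.induction_on with
      | empty =>
        intro _ P _ h
        rwa [Finset.prod_empty, one_mul]
      | @insert q A hq IH =>
        intro hpr P hnd h
        rw [Finset.prod_insert hq, mul_assoc]
        have hq' := (hpr q (Finset.mem_insert_self q A)).1
        have hqb := (hpr q (Finset.mem_insert_self q A)).2
        have hmain := IH (fun r hr => hpr r (Finset.mem_insert_of_mem hr)) P
          (fun r hr => hnd r (Finset.mem_insert_of_mem hr)) h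
        have hqnd : ¬ q ∣ (∏ r ∈ A, r) * P := by
          intro hdd
          rcases (Nat.Prime.dvd_mul hq').mp hdd with h1 | h2
          · have hcp : Nat.Coprime q (∏ r ∈ A, r) := by
              rw [Nat.coprime_prod_right_iff]
              intro r hr
              exact (Nat.coprime_primes hq' (hpr r (Finset.mem_insert_of_mem hr)).1).mpr
                (by rintro rfl; exact hq hr)
            exact (hq'.coprime_iff_not_dvd).mp hcp h1
          · exact hnd q (Finset.mem_insert_self q A) h2
        exact LPConv_add_good hG hq' hqb hqnd hC₀ hmain
    have hfinalb : LPConv G 1 (∏ q ∈ b.primeFactors, q) := by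
      have hsub : S₁ ⊆ b.primeFactors := Finset.inter_subset_right
      have hcond : ∀ q ∈ b.primeFactors \ S₁, q.Prime ∧ ¬ IsBad G q := by
        intro q hqmem
        have hq1 := (Finset.mem_sdiff.mp hqmem).1
        have hqpr : q.Prime := Nat.prime_of_mem_primeFactors hq1
        refine ⟨hqpr, fun hbad => ?_⟩
        by_cases htop : cmIndex G q = ⊤
        · exact hbhyp q ⟨hqpr, hbad, htop⟩ (Nat.dvd_of_mem_primeFactors hq1)
        · have hqSB : q ∈ SBf := (hmemSBf q).mpr ⟨hqpr, hbad, htop⟩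
          exact (Finset.mem_sdiff.mp hqmem).2 (Finset.mem_inter.mpr ⟨hqSB, hq1⟩)
      have hnd : ∀ q ∈ b.primeFactors \ S₁, ¬ q ∣ ∏ r ∈ S₁, r := by
        intro q hqmem hdd
        have hqpr := (hcond q hqmem).1
        have hcp : Nat.Coprime q (∏ r ∈ S₁, r) := by
          rw [Nat.coprime_prod_right_iff]
          intro r hr
          exact (Nat.coprime_primes hqpr (hprimeSBf r (Finset.mem_inter.mp hr).1)).mpr
            (by rintro rfl; exact (Finset.mem_sdiff.mp hqmem).2 hr)
        exact (hqpr.coprime_iff_not_dvd).mp hcp hdd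
      have hres := hadd (b.primeFactors \ S₁) hcond _ hnd hmid
      rwa [Finset.prod_sdiff hsub] at hres
    refine (hSLP b).mpr ?_
    obtain ⟨L, hL⟩ := hfinalb
    refine ⟨L, hL.congr fun y => ?_⟩
    exact LP_congr_P (fun K => (coprime_prod_primes_iff hb).symm) y
  tfae_have 4 → 1 := by
    intro h4 a ha
    have hgood : ∀ b, 0 < b → (∀ p, IsHyperbad G p → ¬ p ∣ b) → LPConv G 1 b := fun b hb hh =>
      (hSLP b).mp (h4 b hb hh)
    refine RConv_of_LPConv ha fun d hd => ?_
    exact claimY hG hgood d (Nat.pos_of_mem_divisors hd) 1 one_pos (Nat.coprime_one_right d)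
      (fun p hp hdd => hp.1.one_lt.ne' (Nat.eq_one_of_dvd_one hdd))
  tfae_finish
end

section
/- Let G : ℕ → ℂ be multiplicative with finitely many bad primes, and suppose R_G(a) converges for every a ∈ ℕ. Then R_G(a) = 0 for every a ∈ ℕ that is not a multiple of the transparency conductor N_T(G). -/
open Filter Finset

section AuxLucht

open ArithmeticFunction

/-- reindex a sum over multiples of `d` in `Icc 1 n`. -/
lemma sum_multiples_aux {M : Type*} [AddCommMonoid M] (f : ℕ → M) (d n : ℕ) (hd : 0 < d) :
    ∑ q ∈ (Finset.Icc 1 n).filter (fun q => d ∣ q), f q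
      = ∑ K ∈ Finset.Icc 1 (n / d), f (d * K) := by
  refine (Finset.sum_nbij' (fun K => d * K) (fun q => q / d) ?_ ?_ ?_ ?_ ?_).symm
  · intro K hK
    simp only [Finset.mem_Icc] at hK
    simp only [Finset.mem_filter, Finset.mem_Icc]
    refine ⟨⟨Nat.mul_pos hd hK.1, ?_⟩, dvd_mul_right d K⟩
    calc d * K = K * d := Nat.mul_comm d K
    _ ≤ n := (Nat.le_div_iff_mul_le hd).1 hK.2
  · intro q hq
    simp only [Finset.mem_filter, Finset.mem_Icc] at hq
    obtain ⟨⟨h1, h2⟩, c, rfl⟩ := hq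
    simp only [Finset.mem_Icc]
    rw [Nat.mul_div_cancel_left c hd]
    have hc : 0 < c := Nat.pos_of_ne_zero (by rintro rfl; simp at h1)
    refine ⟨hc, (Nat.le_div_iff_mul_le hd).2 ?_⟩
    calc c * d = d * c := Nat.mul_comm c d
    _ ≤ n := h2
  · intro K _; exact Nat.mul_div_cancel_left K hd
  · intro q hq
    simp only [Finset.mem_filter] at hq
    exact Nat.mul_div_cancel' hq.2
  · intro K _; rfl

/-- Lemma A: `RS G a x = ∑_{d ∣ a} d · LS G d (x/d)`. -/
lemma RS_eq_sum_LS (G : ℕ → ℂ) {a : ℕ} (ha : 0 < a) (x : ℝ) :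
    RS G a x = ∑ d ∈ a.divisors, (d : ℂ) * LS G d (x / d) := by
  classical
  unfold RS LS
  set n := ⌊x⌋₊ with hn
  have hcR : ∀ q ∈ Finset.Icc 1 n, G q * cR q a
      = ∑ d ∈ a.divisors, if d ∣ q then (d : ℂ) * mu (q / d) * G q else 0 := by
    intro q hq
    simp only [Finset.mem_Icc] at hq
    have hq0 : 0 < q := hq.1
    have hgcd : (Nat.gcd q a).divisors = a.divisors.filter (fun d => d ∣ q) := by
      ext d
      simp only [Nat.mem_divisors, Finset.mem_filter, Nat.dvd_gcd_iff]
      constructor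
      · rintro ⟨⟨h1, h2⟩, _⟩; exact ⟨⟨h2, ha.ne'⟩, h1⟩
      · rintro ⟨⟨h2, _⟩, h1⟩
        exact ⟨⟨h1, h2⟩, Nat.gcd_ne_zero_left hq0.ne'⟩
    rw [cR, hgcd, Finset.sum_filter, Finset.mul_sum]
    refine Finset.sum_congr rfl fun d hd => ?_
    split <;> ring
  rw [Finset.sum_congr rfl hcR, Finset.sum_comm]
  refine Finset.sum_congr rfl fun d hd => ?_
  have hd0 : 0 < d := Nat.pos_of_mem_divisors hd
  rw [← Finset.sum_filter, sum_multiples_aux (fun q => (d : ℂ) * mu (q / d) * G q) d n hd0,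
    Nat.floor_div_natCast x d, Finset.mul_sum]
  refine Finset.sum_congr rfl fun K hK => ?_
  rw [Nat.mul_div_cancel_left K hd0]
  ring

lemma tendsto_div_const_atTop {d : ℕ} (hd : 0 < d) :
    Tendsto (fun x : ℝ => x / (d : ℝ)) atTop atTop :=
  Tendsto.atTop_div_const (by exact_mod_cast hd) tendsto_id

/-- Step 2: convergence of all Lucht series. -/
lemma LConv_all (G : ℕ → ℂ) (hconv : ∀ a : ℕ, 0 < a → RConv G a) :
    ∀ d : ℕ, 0 < d → LConv G d := by
  intro d
  induction d using Nat.strong_induction_on with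
  | _ d ih =>
    intro hd
    obtain ⟨L, hL'⟩ := hconv d hd
    have hL : Tendsto (fun x : ℝ => RS G d x) atTop (nhds L) := hL'
    have hchoose : ∀ e : ℕ, ∃ Le : ℂ, e ∈ d.divisors.erase d →
        Tendsto (fun x : ℝ => LS G e (x / e)) atTop (nhds Le) := by
      intro e
      by_cases he : e ∈ d.divisors.erase d
      · have he' := Finset.mem_of_mem_erase he
        have hed : e ∣ d := (Nat.mem_divisors.1 he').1
        have he0 : 0 < e := Nat.pos_of_mem_divisors he'
        have helt : e < d :=
          lt_of_le_of_ne (Nat.le_of_dvd hd hed) (Finset.ne_of_mem_erase he)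
        obtain ⟨Le, hLe⟩ := ih e helt he0
        exact ⟨Le, fun _ => hLe.comp (tendsto_div_const_atTop he0)⟩
      · exact ⟨0, fun h => absurd h he⟩
    choose Le hLe using hchoose
    have hsum : Tendsto (fun x : ℝ => ∑ e ∈ d.divisors.erase d, (e : ℂ) * LS G e (x / e))
        atTop (nhds (∑ e ∈ d.divisors.erase d, (e : ℂ) * Le e)) :=
      tendsto_finset_sum _ fun e he => ((hLe e he).const_mul _)
    have hid : ∀ x : ℝ, (d : ℂ) * LS G d (x / d)
        = RS G d x - ∑ e ∈ d.divisors.erase d, (e : ℂ) * LS G e (x / e) := by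
      intro x
      rw [RS_eq_sum_LS G hd x, ← Finset.add_sum_erase _ _ (Nat.mem_divisors_self d hd.ne')]
      ring
    have hdLS : Tendsto (fun x : ℝ => (d : ℂ) * LS G d (x / d)) atTop
        (nhds (L - ∑ e ∈ d.divisors.erase d, (e : ℂ) * Le e)) := by
      simp only [hid]
      exact hL.sub hsum
    have hdC : (d : ℂ) ≠ 0 := by exact_mod_cast hd.ne'
    have hLS : Tendsto (fun x : ℝ => LS G d (x / d)) atTop
        (nhds ((L - ∑ e ∈ d.divisors.erase d, (e : ℂ) * Le e) / d)) := by
      have := hdLS.div_const (d : ℂ)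
      refine this.congr fun x => ?_
      rw [mul_div_cancel_left₀ _ hdC]
    refine ⟨(L - ∑ e ∈ d.divisors.erase d, (e : ℂ) * Le e) / (d : ℂ), ?_⟩
    show Tendsto (fun y : ℝ => LS G d y) atTop _
    have hmul : Tendsto (fun y : ℝ => (d : ℝ) * y) atTop atTop :=
      Tendsto.const_mul_atTop (by exact_mod_cast hd) tendsto_id
    have := hLS.comp hmul
    refine this.congr fun y => ?_
    simp only [Function.comp]
    rw [mul_div_cancel_left₀ _ (by exact_mod_cast hd.ne' : (d : ℝ) ≠ 0)]

/-- the `p`-coprime partial sum. -/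
noncomputable def AS (G : ℕ → ℂ) (p m : ℕ) (y : ℝ) : ℂ :=
  ∑ K ∈ (Finset.Icc 1 ⌊y⌋₊).filter (fun K => ¬ p ∣ K), mu K * G (m * K)

/-- Lemma C: splitting the Lucht partial sum at the prime `p`. -/
lemma LS_split (G : ℕ → ℂ) (hG : IsMult G) (hG1 : G 1 = 1) {p : ℕ} (hp : p.Prime)
    {m : ℕ} (hm : 0 < m) (hpm : ¬ p ∣ m) (j : ℕ) (x : ℝ) :
    LS G (m * p ^ j) x = G (p ^ j) * AS G p m x - G (p ^ (j + 1)) * AS G p m (x / p) := by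
  classical
  have hsplit : ∀ (i : ℕ) (t : ℕ), 0 < t → ¬ p ∣ t → G (p ^ i * t) = G (p ^ i) * G t := by
    intro i t ht hpt
    rcases Nat.eq_zero_or_pos i with rfl | hi
    · simp [hG1]
    · exact hG _ _ (pow_pos hp.pos i) ht ((hp.coprime_iff_not_dvd.2 hpt).pow_left i)
  unfold LS
  rw [← Finset.sum_filter_add_sum_filter_not (Finset.Icc 1 ⌊x⌋₊) (fun K => p ∣ K)]
  have hpart2 : ∑ K ∈ (Finset.Icc 1 ⌊x⌋₊).filter (fun K => ¬ p ∣ K),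
      mu K * G (m * p ^ j * K) = G (p ^ j) * AS G p m x := by
    rw [AS, Finset.mul_sum]
    refine Finset.sum_congr rfl fun K hK => ?_
    simp only [Finset.mem_filter, Finset.mem_Icc] at hK
    have hK0 : 0 < K := hK.1.1
    have hpmK : ¬ p ∣ m * K := by
      intro h
      rcases (hp.dvd_mul).1 h with h | h
      · exact hpm h
      · exact hK.2 h
    have : m * p ^ j * K = p ^ j * (m * K) := by ring
    rw [this, hsplit j (m * K) (Nat.mul_pos hm hK0) hpmK]
    ring
  have hpart1 : ∑ K ∈ (Finset.Icc 1 ⌊x⌋₊).filter (fun K => p ∣ K),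
      mu K * G (m * p ^ j * K) = - (G (p ^ (j + 1)) * AS G p m (x / p)) := by
    rw [sum_multiples_aux (fun q => mu q * G (m * p ^ j * q)) p ⌊x⌋₊ hp.pos]
    have hfl : ⌊x / (p : ℝ)⌋₊ = ⌊x⌋₊ / p := Nat.floor_div_natCast x p
    have hzero : ∀ K ∈ Finset.Icc 1 (⌊x⌋₊ / p),
        mu (p * K) * G (m * p ^ j * (p * K)) ≠ 0 → ¬ p ∣ K := by
      intro K hK hne hdvd
      apply hne
      have hsq : ¬ Squarefree (p * K) := by
        intro hs
        obtain ⟨c, rfl⟩ := hdvd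
        exact hp.not_isUnit (hs p ⟨c, by ring⟩)
      have hmu0 : mu (p * K) = 0 := by
        unfold mu
        rw [moebius_eq_zero_of_not_squarefree hsq]
        simp
      rw [hmu0, zero_mul]
    rw [← Finset.sum_filter_of_ne hzero, AS, hfl, Finset.mul_sum,
      ← Finset.sum_neg_distrib]
    refine Finset.sum_congr rfl fun K hK => ?_
    simp only [Finset.mem_filter, Finset.mem_Icc] at hK
    have hK0 : 0 < K := hK.1.1
    have hmu : mu (p * K) = - mu K := by
      unfold mu
      rw [isMultiplicative_moebius.map_mul_of_coprime
        (hp.coprime_iff_not_dvd.2 hK.2), moebius_apply_prime hp]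
      push_cast
      ring
    have hpmK : ¬ p ∣ m * K := by
      intro h
      rcases (hp.dvd_mul).1 h with h | h
      · exact hpm h
      · exact hK.2 h
    have harg : m * p ^ j * (p * K) = p ^ (j + 1) * (m * K) := by ring
    rw [hmu, harg, hsplit (j + 1) (m * K) (Nat.mul_pos hm hK0) hpmK]
    ring
  rw [hpart1, hpart2]
  ring

end AuxLucht
section AuxLucht2

open ArithmeticFunction

lemma cmIndex_eq_top_of_all (G : ℕ → ℂ) {p : ℕ}
    (h : ∀ k : ℕ, 1 ≤ k → G (p ^ k) = G p ^ k) : cmIndex G p = ⊤ := by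
  have hmem : ∀ w : ℕ, w ∈ {n : ℕ | ∀ k : ℕ, 1 ≤ k → k ≤ n → G (p ^ k) = G p ^ k} :=
    fun w k hk _ => h k hk
  rw [cmIndex, eq_top_iff, ← ENat.iSup_natCast]
  exact iSup_le fun w => le_iSup₂ (f := fun (w : ℕ) _ => (w : ℕ∞)) w (hmem w)

/-- facts about the transparency index of a simply transparent prime. -/
lemma trIdx_spec (G : ℕ → ℂ) {p : ℕ} (hst : IsSimplyTransparent G p) :
    1 ≤ (trIdx G p).toNat ∧
      (∀ k : ℕ, 1 ≤ k → k ≤ (trIdx G p).toNat → G (p ^ k) = 1) ∧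
      G (p ^ ((trIdx G p).toNat + 1)) ≠ 1 := by
  obtain ⟨hp, hGp, hcm⟩ := hst
  set T : Set ℕ := {K : ℕ | G (p ^ (K + 1)) ≠ 1} with hT
  have hne : T.Nonempty := by
    by_contra hempty
    apply hcm
    apply cmIndex_eq_top_of_all
    intro k hk
    have : ∀ K : ℕ, G (p ^ (K + 1)) = 1 := by
      intro K
      by_contra hh
      exact hempty ⟨K, hh⟩
    obtain ⟨K, rfl⟩ : ∃ K, k = K + 1 := ⟨k - 1, by omega⟩
    rw [this K, hGp, one_pow]
  set v := sInf T with hv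
  have hvT : v ∈ T := Nat.sInf_mem hne
  have h0T : 0 ∉ T := by
    simp only [hT, Set.mem_setOf_eq, zero_add, pow_one, not_not]
    exact hGp
  have hv1 : 1 ≤ v := by
    rcases Nat.eq_zero_or_pos v with h | h
    · exact absurd (h ▸ hvT) h0T
    · exact h
  have htr : trIdx G p = (v : ℕ∞) := by
    refine le_antisymm (iInf₂_le v hvT) (le_iInf₂ fun K hK => ?_)
    exact_mod_cast Nat.sInf_le hK
  rw [htr]
  refine ⟨by simpa using hv1, fun k hk hkv => ?_, by simpa [hT] using hvT⟩
  simp only [ENat.toNat_coe] at hkv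
  obtain ⟨K, rfl⟩ : ∃ K, k = K + 1 := ⟨k - 1, by omega⟩
  have : K ∉ T := Nat.notMem_of_lt_sInf (by omega)
  simpa [hT, Set.mem_setOf_eq, not_not] using this

/-- Lemma D: vanishing of Lucht limits below the transparency index. -/
lemma Llim_zero (G : ℕ → ℂ) (hG : IsMult G) (hG1 : G 1 = 1)
    (hconv : ∀ a : ℕ, 0 < a → RConv G a)
    {p : ℕ} (hp : p.Prime) {m : ℕ} (hm : 0 < m) (hpm : ¬ p ∣ m)
    {v : ℕ} (hv1 : 1 ≤ v) (hval : ∀ k : ℕ, 1 ≤ k → k ≤ v → G (p ^ k) = 1)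
    (hvne : G (p ^ (v + 1)) ≠ 1) {j : ℕ} (hj : j < v) :
    LTendsto G (m * p ^ j) 0 := by
  -- limits of the Lucht series at m * p^i
  have hLc : ∀ i : ℕ, ∃ Li : ℂ, LTendsto G (m * p ^ i) Li := by
    intro i
    exact LConv_all G hconv _ (Nat.mul_pos hm (pow_pos hp.pos i))
  choose Li hLi using hLc
  have hpR : (0 : ℝ) < p := by exact_mod_cast hp.pos
  -- the split form of each limit statement
  have hsplitlim : ∀ i : ℕ, Tendsto
      (fun x : ℝ => G (p ^ i) * AS G p m x - G (p ^ (i + 1)) * AS G p m (x / p))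
      atTop (nhds (Li i)) := by
    intro i
    refine (hLi i).congr fun x => ?_
    exact LS_split G hG hG1 hp hm hpm i x
  have hGp0 : ∀ i : ℕ, i ≤ v → G (p ^ i) = 1 := by
    intro i hi
    rcases Nat.eq_zero_or_pos i with rfl | hi0
    · simpa using hG1
    · exact hval i hi0 hi
  -- basic limit : A x - A (x/p) → Li 0
  have hB : Tendsto (fun x : ℝ => AS G p m x - AS G p m (x / p)) atTop (nhds (Li 0)) := by
    refine (hsplitlim 0).congr fun x => ?_
    rw [hGp0 0 (by omega), hGp0 1 hv1, one_mul, one_mul]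
  -- at i = v : A x - c * A (x/p) → Li v, where c = G (p^(v+1)) ≠ 1
  set c : ℂ := G (p ^ (v + 1)) with hc
  have hV : Tendsto (fun x : ℝ => AS G p m x - c * AS G p m (x / p)) atTop (nhds (Li v)) := by
    refine (hsplitlim v).congr fun x => ?_
    rw [hGp0 v le_rfl, one_mul]
  -- subtracting : (c - 1) * A (x/p) → Li 0 - Li v
  have hsub : Tendsto (fun x : ℝ => (c - 1) * AS G p m (x / p)) atTop
      (nhds (Li 0 - Li v)) := by
    refine (hB.sub hV).congr fun x => ?_
    ring
  have hc1 : c - 1 ≠ 0 := sub_ne_zero.2 hvne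
  set α : ℂ := (Li 0 - Li v) / (c - 1) with hα
  have hAp : Tendsto (fun x : ℝ => AS G p m (x / p)) atTop (nhds α) := by
    have := hsub.div_const (c - 1)
    refine this.congr fun x => ?_
    rw [mul_div_cancel_left₀ _ hc1]
  have hA : Tendsto (fun x : ℝ => AS G p m x) atTop (nhds α) := by
    have hmul : Tendsto (fun y : ℝ => (p : ℝ) * y) atTop atTop :=
      Tendsto.const_mul_atTop hpR tendsto_id
    have := hAp.comp hmul
    refine this.congr fun y => ?_
    simp only [Function.comp]
    rw [mul_div_cancel_left₀ _ hpR.ne']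
  -- now the limit at level j is α - α = 0
  have hj' : Tendsto (fun x : ℝ => AS G p m x - AS G p m (x / p)) atTop (nhds (Li j)) := by
    refine (hsplitlim j).congr fun x => ?_
    rw [hGp0 j (by omega), hGp0 (j + 1) (by omega), one_mul, one_mul]
  have hzero : Tendsto (fun x : ℝ => AS G p m x - AS G p m (x / p)) atTop (nhds (α - α)) :=
    hA.sub hAp
  have : Li j = α - α := tendsto_nhds_unique hj' hzero
  rw [show (0 : ℂ) = Li j by rw [this, sub_self]]
  exact hLi j

/-- product of prime powers over a finset of primes divides `a` if each does. -/
lemma prod_primepow_dvd {s : Finset ℕ} (hs : ∀ p ∈ s, p.Prime) (e : ℕ → ℕ) {a : ℕ}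
    (h : ∀ p ∈ s, p ^ e p ∣ a) : (∏ p ∈ s, p ^ e p) ∣ a := by
  classical
  induction s using Finset.induction_on with
  | empty => simpa using one_dvd a
  | @insert q s hq ih =>
    rw [Finset.prod_insert hq]
    have hqp : q.Prime := hs q (Finset.mem_insert_self q s)
    have hcop : Nat.Coprime (q ^ e q) (∏ p ∈ s, p ^ e p) := by
      refine Nat.Coprime.pow_left _ (Nat.Coprime.prod_right fun p hp => ?_)
      exact Nat.Coprime.pow_right _
        ((Nat.coprime_primes hqp (hs p (Finset.mem_insert_of_mem hp))).2
          (fun hqe => hq (hqe ▸ hp)))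
    exact Nat.Coprime.mul_dvd_of_dvd_of_dvd hcop (h q (Finset.mem_insert_self q s))
      (ih (fun p hp => hs p (Finset.mem_insert_of_mem hp))
        (fun p hp => h p (Finset.mem_insert_of_mem hp)))

end AuxLucht2
/-- `R_G(a) = 0` whenever `a` is not a multiple of the transparency conductor `N_T(G)`
(Corollary 8.2). -/
theorem stmt_1 (G : ℕ → ℂ) (hG : IsMult G)
    (hfin : {p : ℕ | p.Prime ∧ IsBad G p}.Finite)
    (hconv : ∀ a : ℕ, 0 < a → RConv G a) :
    ∀ a : ℕ, 0 < a → ¬ transpCond G ∣ a → RTendsto G a 0 := by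
  intro a ha hndvd
  by_cases hG1 : G 1 = 1
  swap
  · -- degenerate case : G 1 ≠ 1 forces G ≡ 0 on positives
    have hG10 : G 1 = 0 := by
      have h11 : G 1 = G 1 * G 1 := by
        simpa using hG 1 1 one_pos one_pos (Nat.coprime_one_left 1)
      have hfac : G 1 * (G 1 - 1) = 0 := by
        have := h11.symm
        ring_nf
        ring_nf at this
        linear_combination -h11
      rcases mul_eq_zero.1 hfac with h | h
      · exact h
      · exact absurd (by linear_combination h) hG1
    have hG0 : ∀ n : ℕ, 0 < n → G n = 0 := by
      intro n hn
      have := hG n 1 hn one_pos (Nat.coprime_one_right n)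
      simpa [hG10] using this
    have hRS : ∀ x : ℝ, RS G a x = 0 := by
      intro x
      refine Finset.sum_eq_zero fun q hq => ?_
      rw [hG0 q (Finset.mem_Icc.1 hq).1, zero_mul]
    show Tendsto (fun x : ℝ => RS G a x) atTop (nhds 0)
    simp only [hRS]
    exact tendsto_const_nhds
  -- main case
  -- the simply transparent primes form a finite set
  have hsub : {p : ℕ | IsSimplyTransparent G p} ⊆ {p : ℕ | p.Prime ∧ IsBad G p} := by
    rintro p ⟨hp, hGp, _⟩
    refine ⟨hp, ?_, ?_⟩
    · rw [hGp]; simp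
    · rw [hGp]
      simpa using (by exact_mod_cast hp.one_lt.le : (1 : ℝ) ≤ p)
  have hS : {p : ℕ | IsSimplyTransparent G p}.Finite := hfin.subset hsub
  have hTC : transpCond G = ∏ p ∈ hS.toFinset, p ^ (trIdx G p).toNat := by
    rw [transpCond, ← finprod_mem_coe_finset, hS.coe_toFinset]
  -- extract a simply transparent prime whose power does not divide a
  have hex : ∃ p ∈ hS.toFinset, ¬ p ^ (trIdx G p).toNat ∣ a := by
    by_contra hall
    push_neg at hall
    exact hndvd (hTC ▸ prod_primepow_dvd
      (fun p hp => ((hS.mem_toFinset.1 hp).1)) _ hall)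
  obtain ⟨p, hpS, hpa⟩ := hex
  have hst : IsSimplyTransparent G p := hS.mem_toFinset.1 hpS
  have hp : p.Prime := hst.1
  obtain ⟨hv1, hval, hvne⟩ := trIdx_spec G hst
  set v := (trIdx G p).toNat with hvdef
  -- a's p-adic valuation is < v
  have hea : a.factorization p < v := by
    by_contra hle
    exact hpa (Nat.pow_dvd_of_le_of_pow_dvd (by omega) (Nat.ordProj_dvd a p))
  -- every divisor of a has Lucht limit 0
  have hLd : ∀ d : ℕ, d ∈ a.divisors → LTendsto G d 0 := by
    intro d hd
    have hdd : d ∣ a := (Nat.mem_divisors.1 hd).1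
    have hd0 : 0 < d := Nat.pos_of_mem_divisors hd
    set j := d.factorization p with hjdef
    set m := d / p ^ j with hmdef
    have hdm : d = m * p ^ j := by
      rw [hmdef, hjdef]
      rw [Nat.mul_comm]
      exact (Nat.ordProj_mul_ordCompl_eq_self d p).symm
    have hm0 : 0 < m := Nat.ordCompl_pos p hd0.ne'
    have hpm : ¬ p ∣ m := Nat.not_dvd_ordCompl hp hd0.ne'
    have hjv : j < v := by
      have hj_le : j ≤ a.factorization p := by
        have : p ^ j ∣ a := (Nat.ordProj_dvd d p).trans hdd
        exact (Nat.Prime.pow_dvd_iff_le_factorization hp ha.ne').1 this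
      omega
    rw [hdm]
    exact Llim_zero G hG hG1 hconv hp hm0 hpm hv1 hval hvne hjv
  -- assemble the Ramanujan series limit
  show Tendsto (fun x : ℝ => RS G a x) atTop (nhds 0)
  have hid : ∀ x : ℝ, RS G a x = ∑ d ∈ a.divisors, (d : ℂ) * LS G d (x / d) :=
    RS_eq_sum_LS G ha
  simp only [hid]
  have : Tendsto (fun x : ℝ => ∑ d ∈ a.divisors, (d : ℂ) * LS G d (x / d)) atTop
      (nhds (∑ d ∈ a.divisors, (d : ℂ) * 0)) := by
    refine tendsto_finset_sum _ fun d hd => ?_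
    have hd0 : 0 < d := Nat.pos_of_mem_divisors hd
    exact ((hLd d hd).comp (tendsto_div_const_atTop hd0)).const_mul _
  simpa using this
end

section
/- Let F : ℕ → ℂ be a function that is not identically zero. Let G₁, G₂ : ℕ → ℂ be multiplicative functions, each with finitely many bad primes, such that R_{G₁}(a) and R_{G₂}(a) converge with R_{G₁}(a) = R_{G₂}(a) = F(a) for all a ∈ ℕ. If G₁ and G₂ have the same opacity core, i.e. H_{G₁}(q) = H_{G₂}(q) for all q ∈ ℕ, then G₁ = G₂. -/
open Filter Finset

namespace Rigidity
open Filter Finset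

noncomputable def LSn (G : ℕ → ℂ) (d N : ℕ) : ℂ := ∑ K ∈ Finset.Icc 1 N, mu K * G (d * K)

noncomputable def RSn (G : ℕ → ℂ) (a N : ℕ) : ℂ := ∑ q ∈ Finset.Icc 1 N, G q * cR q a

noncomputable def Tn (G : ℕ → ℂ) (p d N : ℕ) : ℂ :=
  ∑ K ∈ (Finset.Icc 1 N).filter (fun K => ¬ p ∣ K), mu K * G (d * K)

lemma rtendsto_nat {G : ℕ → ℂ} {a : ℕ} {L : ℂ} (h : RTendsto G a L) :
    Tendsto (fun N : ℕ => RSn G a N) atTop (nhds L) := by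
  have he : (fun N : ℕ => RSn G a N) = (fun x : ℝ => RS G a x) ∘ (fun N : ℕ => (N : ℝ)) := by
    funext N
    simp [RS, RSn, Nat.floor_natCast]
  rw [he]
  exact h.comp tendsto_natCast_atTop_atTop

lemma mu_one : mu 1 = 1 := by simp [mu]

lemma mu_prime {p : ℕ} (hp : p.Prime) : mu p = -1 := by
  simp [mu, ArithmeticFunction.moebius_apply_prime hp]

lemma mu_mul {m n : ℕ} (h : Nat.Coprime m n) : mu (m * n) = mu m * mu n := by
  simp [mu, ArithmeticFunction.isMultiplicative_moebius.map_mul_of_coprime h]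

lemma mu_eq_zero {n : ℕ} (h : ¬ Squarefree n) : mu n = 0 := by
  simp [mu, ArithmeticFunction.moebius_eq_zero_of_not_squarefree h]

lemma tendsto_nat_div {d : ℕ} (hd : 0 < d) : Tendsto (fun N : ℕ => N / d) atTop atTop := by
  apply tendsto_atTop_atTop.2
  intro b
  exact ⟨b * d, fun n hn => (Nat.le_div_iff_mul_le hd).2 hn⟩

lemma gcd_divisors {q a : ℕ} (hq : 0 < q) (ha : 0 < a) :
    (Nat.gcd q a).divisors = a.divisors.filter (· ∣ q) := by
  ext d
  simp only [Nat.mem_divisors, Finset.mem_filter, Nat.dvd_gcd_iff]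
  constructor
  · rintro ⟨⟨h1, h2⟩, -⟩
    exact ⟨⟨h2, ha.ne'⟩, h1⟩
  · rintro ⟨⟨h2, -⟩, h1⟩
    refine ⟨⟨h1, h2⟩, fun hg => ?_⟩
    exact hq.ne' ((Nat.gcd_eq_zero_iff.1 hg).1)

lemma sum_filter_dvd (d N : ℕ) (hd : 0 < d) (f : ℕ → ℂ) :
    ∑ q ∈ (Finset.Icc 1 N).filter (fun q => d ∣ q), f q = ∑ m ∈ Finset.Icc 1 (N / d), f (d * m) := by
  refine Finset.sum_nbij' (fun q => q / d) (fun m => d * m) ?_ ?_ ?_ ?_ ?_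
  · intro q hq
    simp only [Finset.mem_filter, Finset.mem_Icc] at hq
    obtain ⟨⟨h1, h2⟩, hdvd⟩ := hq
    simp only [Finset.mem_Icc]
    exact ⟨Nat.one_le_div_iff hd |>.2 (Nat.le_of_dvd (by omega) hdvd), Nat.div_le_div_right h2⟩
  · intro m hm
    simp only [Finset.mem_Icc] at hm
    simp only [Finset.mem_filter, Finset.mem_Icc]
    have h2 : m * d ≤ N := (Nat.le_div_iff_mul_le hd).1 hm.2
    exact ⟨⟨Nat.one_le_iff_ne_zero.2 (Nat.mul_ne_zero hd.ne' (by omega)), by rw [mul_comm]; omega⟩, Dvd.intro m rfl⟩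
  · intro q hq
    simp only [Finset.mem_filter] at hq
    exact Nat.mul_div_cancel' hq.2
  · intro m hm
    exact Nat.mul_div_cancel_left m hd
  · intro q hq
    simp only [Finset.mem_filter] at hq
    rw [Nat.mul_div_cancel' hq.2]
lemma RSn_eq (G : ℕ → ℂ) {a : ℕ} (ha : 0 < a) (N : ℕ) :
    RSn G a N = ∑ d ∈ a.divisors, (d : ℂ) * LSn G d (N / d) := by
  have step1 : RSn G a N
      = ∑ q ∈ Finset.Icc 1 N, ∑ d ∈ a.divisors.filter (· ∣ q), G q * ((d : ℂ) * mu (q / d)) := by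
    refine Finset.sum_congr rfl fun q hq => ?_
    simp only [Finset.mem_Icc] at hq
    rw [cR, Finset.mul_sum, gcd_divisors (by omega : 0 < q) ha]
  rw [step1]
  have step2 : ∀ q ∈ Finset.Icc 1 N,
      ∑ d ∈ a.divisors.filter (· ∣ q), G q * ((d : ℂ) * mu (q / d))
      = ∑ d ∈ a.divisors, if d ∣ q then G q * ((d : ℂ) * mu (q / d)) else 0 := by
    intro q hq
    rw [Finset.sum_filter]
  rw [Finset.sum_congr rfl step2, Finset.sum_comm]
  refine Finset.sum_congr rfl fun d hd => ?_
  have hdpos : 0 < d := Nat.pos_of_mem_divisors hd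
  have : ∑ q ∈ Finset.Icc 1 N, (if d ∣ q then G q * ((d : ℂ) * mu (q / d)) else 0)
      = ∑ q ∈ (Finset.Icc 1 N).filter (fun q => d ∣ q), G q * ((d : ℂ) * mu (q / d)) := by
    rw [Finset.sum_filter]
  rw [this, sum_filter_dvd d N hdpos]
  rw [LSn, Finset.mul_sum]
  refine Finset.sum_congr rfl fun m hm => ?_
  rw [Nat.mul_div_cancel_left m hdpos]
  ring

lemma split (G : ℕ → ℂ) (hG : IsMult G) {p d : ℕ} (hp : p.Prime) (hd : 0 < d)
    (hpd : ¬ p ∣ d) (k N : ℕ) :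
    LSn G (d * p ^ k) N = G (p ^ k) * Tn G p d N - G (p ^ (k + 1)) * Tn G p d (N / p) := by
  have hppos : 0 < p := hp.pos
  -- split the sum over K into p ∤ K and p ∣ K
  have hsplit : LSn G (d * p ^ k) N
      = (∑ K ∈ (Finset.Icc 1 N).filter (fun K => ¬ p ∣ K), mu K * G (d * p ^ k * K))
        + ∑ K ∈ (Finset.Icc 1 N).filter (fun K => p ∣ K), mu K * G (d * p ^ k * K) := by
    rw [LSn, ← Finset.sum_filter_add_sum_filter_not (Finset.Icc 1 N) (fun K => p ∣ K), add_comm]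
  rw [hsplit]
  have part1 : ∑ K ∈ (Finset.Icc 1 N).filter (fun K => ¬ p ∣ K), mu K * G (d * p ^ k * K)
      = G (p ^ k) * Tn G p d N := by
    rw [Tn, Finset.mul_sum]
    refine Finset.sum_congr rfl fun K hK => ?_
    simp only [Finset.mem_filter, Finset.mem_Icc] at hK
    have hKpos : 0 < K := by omega
    have hcop : Nat.Coprime (p ^ k) (d * K) :=
      Nat.Coprime.pow_left k ((hp.coprime_iff_not_dvd).2 fun h => by
        rcases (hp.dvd_mul.1 h) with h' | h'
        · exact hpd h'
        · exact hK.2 h')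
    have : d * p ^ k * K = p ^ k * (d * K) := by ring
    rw [this, hG _ _ (by positivity) (by positivity) hcop]
    ring
  have part2 : ∑ K ∈ (Finset.Icc 1 N).filter (fun K => p ∣ K), mu K * G (d * p ^ k * K)
      = - (G (p ^ (k + 1)) * Tn G p d (N / p)) := by
    have hre : ∑ K ∈ (Finset.Icc 1 N).filter (fun K => p ∣ K), mu K * G (d * p ^ k * K)
        = ∑ m ∈ Finset.Icc 1 (N / p), mu (p * m) * G (d * p ^ k * (p * m)) :=
      sum_filter_dvd p N hppos _
    rw [hre, Tn, Finset.mul_sum, ← Finset.sum_neg_distrib]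
    rw [← Finset.sum_filter_add_sum_filter_not (Finset.Icc 1 (N / p)) (fun m => ¬ p ∣ m)]
    have zero2 : ∑ m ∈ (Finset.Icc 1 (N / p)).filter (fun m => ¬ ¬ p ∣ m),
        mu (p * m) * G (d * p ^ k * (p * m)) = 0 := by
      refine Finset.sum_eq_zero fun m hm => ?_
      simp only [Finset.mem_filter, not_not] at hm
      have : ¬ Squarefree (p * m) := by
        intro hsq
        exact hp.one_lt.ne' (Nat.isUnit_iff.1 (hsq p (mul_dvd_mul_left p hm.2)) ▸ rfl)
      rw [mu_eq_zero this, zero_mul]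
    rw [zero2, add_zero]
    refine Finset.sum_congr rfl fun m hm => ?_
    simp only [Finset.mem_filter, Finset.mem_Icc] at hm
    have hmpos : 0 < m := by omega
    have hpm : ¬ p ∣ m := hm.2
    have hmucop : Nat.Coprime p m := (hp.coprime_iff_not_dvd).2 hpm
    rw [mu_mul hmucop, mu_prime hp]
    have hcop : Nat.Coprime (p ^ (k + 1)) (d * m) :=
      Nat.Coprime.pow_left _ ((hp.coprime_iff_not_dvd).2 fun h => by
        rcases (hp.dvd_mul.1 h) with h' | h'
        · exact hpd h'
        · exact hpm h')
    have harg : d * p ^ k * (p * m) = p ^ (k + 1) * (d * m) := by ring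
    rw [harg, hG _ _ (by positivity) (by positivity) hcop]
    ring
  rw [part1, part2]
  ring
lemma tendsto_nat_mul (a : ℕ) (ha : 0 < a) : Tendsto (fun N : ℕ => N * a) atTop atTop := by
  apply tendsto_atTop_atTop.2
  intro b
  exact ⟨b, fun n hn => le_trans hn (Nat.le_mul_of_pos_right n ha)⟩

lemma sum_divisors_split {a : ℕ} (ha : 0 < a) (f : ℕ → ℂ) :
    ∑ d ∈ a.divisors, f d = f a + ∑ d ∈ (a.divisors).erase a, f d :=
  (Finset.add_sum_erase _ f (Nat.mem_divisors_self a ha.ne')).symm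

lemma mem_proper_lt {a d : ℕ} (ha : 0 < a) (hd : d ∈ (a.divisors).erase a) : 0 < d ∧ d < a := by
  have h1 := Finset.mem_of_mem_erase hd
  have h2 := Finset.ne_of_mem_erase hd
  have h3 := Nat.pos_of_mem_divisors h1
  have h4 := Nat.le_of_dvd ha (Nat.dvd_of_mem_divisors h1)
  exact ⟨h3, lt_of_le_of_ne h4 h2⟩

lemma exists_ell (G F : ℕ → ℂ) (hconv : ∀ a : ℕ, 0 < a → RTendsto G a (F a)) :
    ∃ ℓ : ℕ → ℂ, (∀ d : ℕ, 0 < d → Tendsto (fun N : ℕ => LSn G d N) atTop (nhds (ℓ d))) ∧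
      (∀ a : ℕ, 0 < a → F a = ∑ d ∈ a.divisors, (d : ℂ) * ℓ d) := by
  classical
  have main : ∀ a : ℕ, 0 < a → ∃ L, Tendsto (fun N : ℕ => LSn G a N) atTop (nhds L) := by
    intro a
    induction a using Nat.strong_induction_on with
    | _ a IH =>
      intro ha
      set ℓ0 : ℕ → ℂ := fun d =>
        if h : ∃ L, Tendsto (fun N : ℕ => LSn G d N) atTop (nhds L) then h.choose else 0 with hℓ0
      have hprop : ∀ d ∈ (a.divisors).erase a,
          Tendsto (fun N : ℕ => (d : ℂ) * LSn G d (N / d)) atTop (nhds ((d : ℂ) * ℓ0 d)) := by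
        intro d hd
        obtain ⟨hd0, hda⟩ := mem_proper_lt ha hd
        have hex := IH d hda hd0
        have : Tendsto (fun N : ℕ => LSn G d N) atTop (nhds (ℓ0 d)) := by
          rw [hℓ0]
          simp only [dif_pos hex]
          exact hex.choose_spec
        exact Tendsto.const_mul _ (this.comp (tendsto_nat_div hd0))
      have hS : Tendsto (fun N : ℕ => ∑ d ∈ (a.divisors).erase a, (d : ℂ) * LSn G d (N / d))
          atTop (nhds (∑ d ∈ (a.divisors).erase a, (d : ℂ) * ℓ0 d)) :=
        tendsto_finset_sum _ hprop
      have hR : Tendsto (fun N : ℕ => RSn G a N) atTop (nhds (F a)) := rtendsto_nat (hconv a ha)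
      have hRdec : ∀ N : ℕ, RSn G a N
          = (a : ℂ) * LSn G a (N / a) + ∑ d ∈ (a.divisors).erase a, (d : ℂ) * LSn G d (N / d) := by
        intro N
        rw [RSn_eq G ha N, sum_divisors_split ha]
      have hmain : Tendsto (fun N : ℕ => (a : ℂ) * LSn G a (N / a)) atTop
          (nhds (F a - ∑ d ∈ (a.divisors).erase a, (d : ℂ) * ℓ0 d)) := by
        have := hR.sub hS
        refine this.congr fun N => ?_
        rw [hRdec N]
        ring
      have hapos : (a : ℂ) ≠ 0 := Nat.cast_ne_zero.2 ha.ne'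
      have hdiv : Tendsto (fun N : ℕ => LSn G a (N / a)) atTop
          (nhds ((a : ℂ)⁻¹ * (F a - ∑ d ∈ (a.divisors).erase a, (d : ℂ) * ℓ0 d))) := by
        have h' := hmain.const_mul ((a : ℂ)⁻¹)
        refine h'.congr fun N => ?_
        field_simp
      refine ⟨(a : ℂ)⁻¹ * (F a - ∑ d ∈ (a.divisors).erase a, (d : ℂ) * ℓ0 d), ?_⟩
      have hcomp := hdiv.comp (tendsto_nat_mul a ha)
      refine hcomp.congr fun N => ?_
      simp only [Function.comp]
      rw [Nat.mul_div_cancel _ ha]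
  set ℓ : ℕ → ℂ := fun d =>
    if h : ∃ L, Tendsto (fun N : ℕ => LSn G d N) atTop (nhds L) then h.choose else 0 with hℓ
  have hℓt : ∀ d : ℕ, 0 < d → Tendsto (fun N : ℕ => LSn G d N) atTop (nhds (ℓ d)) := by
    intro d hd
    have hex := main d hd
    rw [hℓ]
    simp only [dif_pos hex]
    exact hex.choose_spec
  refine ⟨ℓ, hℓt, fun a ha => ?_⟩
  have hR : Tendsto (fun N : ℕ => RSn G a N) atTop (nhds (F a)) := rtendsto_nat (hconv a ha)
  have hS : Tendsto (fun N : ℕ => RSn G a N) atTop (nhds (∑ d ∈ a.divisors, (d : ℂ) * ℓ d)) := by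
    have : Tendsto (fun N : ℕ => ∑ d ∈ a.divisors, (d : ℂ) * LSn G d (N / d)) atTop
        (nhds (∑ d ∈ a.divisors, (d : ℂ) * ℓ d)) := by
      refine tendsto_finset_sum _ fun d hd => ?_
      have hd0 := Nat.pos_of_mem_divisors hd
      exact Tendsto.const_mul _ ((hℓt d hd0).comp (tendsto_nat_div hd0))
    refine this.congr fun N => (RSn_eq G ha N).symm
  exact tendsto_nhds_unique hR hS

lemma ell_unique {F ℓ₁ ℓ₂ : ℕ → ℂ}
    (h1 : ∀ a : ℕ, 0 < a → F a = ∑ d ∈ a.divisors, (d : ℂ) * ℓ₁ d)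
    (h2 : ∀ a : ℕ, 0 < a → F a = ∑ d ∈ a.divisors, (d : ℂ) * ℓ₂ d) :
    ∀ a : ℕ, 0 < a → ℓ₁ a = ℓ₂ a := by
  intro a
  induction a using Nat.strong_induction_on with
  | _ a IH =>
    intro ha
    have key : ∑ d ∈ a.divisors, (d : ℂ) * ℓ₁ d = ∑ d ∈ a.divisors, (d : ℂ) * ℓ₂ d :=
      (h1 a ha).symm.trans (h2 a ha)
    rw [sum_divisors_split ha, sum_divisors_split ha] at key
    have hsame : ∑ d ∈ (a.divisors).erase a, (d : ℂ) * ℓ₁ d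
        = ∑ d ∈ (a.divisors).erase a, (d : ℂ) * ℓ₂ d := by
      refine Finset.sum_congr rfl fun d hd => ?_
      obtain ⟨hd0, hda⟩ := mem_proper_lt ha hd
      rw [IH d hda hd0]
    rw [hsame] at key
    have : (a : ℂ) * ℓ₁ a = (a : ℂ) * ℓ₂ a := by linear_combination key
    exact mul_left_cancel₀ (Nat.cast_ne_zero.2 ha.ne') this
lemma G_one (G : ℕ → ℂ) (hG : IsMult G) : G 1 = 1 ∨ ∀ n : ℕ, 0 < n → G n = 0 := by
  have h1 : G 1 = G 1 * G 1 := by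
    have := hG 1 1 one_pos one_pos (Nat.coprime_one_left 1)
    simpa using this
  by_cases h : G 1 = 0
  · right
    intro n hn
    have h2 := hG n 1 hn one_pos (Nat.coprime_one_right n)
    rw [mul_one, h, mul_zero] at h2
    exact h2
  · left
    have h2 : G 1 * G 1 = G 1 * 1 := by rw [← h1, mul_one]
    exact mul_left_cancel₀ h h2

lemma pow_of_P (G : ℕ → ℂ) {p : ℕ} (hG1 : G 1 = 1)
    (hP : ∀ k : ℕ, G (p ^ (k + 1)) = G p * G (p ^ k)) :
    ∀ k : ℕ, G (p ^ k) = (G p) ^ k := by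
  intro k
  induction k with
  | zero => simpa using hG1
  | succ n ih => rw [hP n, ih]; ring

lemma geo_fun (G : ℕ → ℂ) (hG : IsMult G) {p : ℕ} (hp : p.Prime) (hG1 : G 1 = 1)
    (hP : ∀ k : ℕ, G (p ^ (k + 1)) = G p * G (p ^ k))
    {d : ℕ} (hd : 0 < d) (hpd : ¬ p ∣ d) (k N : ℕ) :
    LSn G (d * p ^ k) N = (G p) ^ k * LSn G d N := by
  have hpow := pow_of_P G hG1 hP
  have h1 := split G hG hp hd hpd k N
  have h0 := split G hG hp hd hpd 0 N
  simp only [pow_zero, mul_one, hG1, zero_add, pow_one, one_mul] at h0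
  rw [h1, hpow k, hpow (k + 1), h0]
  ring

lemma geo_ell (G : ℕ → ℂ) (hG : IsMult G) {p : ℕ} (hp : p.Prime) (hG1 : G 1 = 1)
    {ℓ : ℕ → ℂ} (hℓ : ∀ n : ℕ, 0 < n → Tendsto (fun N : ℕ => LSn G n N) atTop (nhds (ℓ n)))
    (hP : ∀ k : ℕ, G (p ^ (k + 1)) = G p * G (p ^ k))
    {d : ℕ} (hd : 0 < d) (hpd : ¬ p ∣ d) (k : ℕ) :
    ℓ (d * p ^ k) = (G p) ^ k * ℓ d := by
  have hdp : 0 < d * p ^ k := Nat.mul_pos hd (pow_pos hp.pos _)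
  have h1 : Tendsto (fun N : ℕ => LSn G (d * p ^ k) N) atTop (nhds (ℓ (d * p ^ k))) :=
    hℓ _ hdp
  have h2 : Tendsto (fun N : ℕ => LSn G (d * p ^ k) N) atTop (nhds ((G p) ^ k * ℓ d)) := by
    have := (hℓ d hd).const_mul ((G p) ^ k)
    exact this.congr fun N => (geo_fun G hG hp hG1 hP hd hpd k N).symm
  exact tendsto_nhds_unique h1 h2

lemma lin_ell (G : ℕ → ℂ) (hG : IsMult G) {p : ℕ} (hp : p.Prime) (hG1 : G 1 = 1)
    {ℓ : ℕ → ℂ} (hℓ : ∀ n : ℕ, 0 < n → Tendsto (fun N : ℕ => LSn G n N) atTop (nhds (ℓ n)))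
    {k₀ : ℕ} (hk₀ : G (p ^ (k₀ + 1)) ≠ G p * G (p ^ k₀))
    {d : ℕ} (hd : 0 < d) (hpd : ¬ p ∣ d) :
    ∃ τ : ℂ, ∀ k : ℕ, ℓ (d * p ^ k) = (G (p ^ k) - G (p ^ (k + 1))) * τ := by
  set D : ℂ := G (p ^ (k₀ + 1)) - G p * G (p ^ k₀) with hD
  have hDne : D ≠ 0 := sub_ne_zero.2 hk₀
  set τ : ℂ := D⁻¹ * (G (p ^ (k₀ + 1)) * ℓ d - G p * ℓ (d * p ^ k₀)) with hτ
  -- functional identity for Tn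
  have hTid : ∀ N : ℕ, Tn G p d N
      = D⁻¹ * (G (p ^ (k₀ + 1)) * LSn G d N - G p * LSn G (d * p ^ k₀) N) := by
    intro N
    have h0 := split G hG hp hd hpd 0 N
    simp only [pow_zero, mul_one, hG1, zero_add, pow_one, one_mul] at h0
    have h1 := split G hG hp hd hpd k₀ N
    rw [h0, h1]
    field_simp
    rw [hD]
    ring
  have hT : Tendsto (fun N : ℕ => Tn G p d N) atTop (nhds τ) := by
    have hA := (hℓ d hd).const_mul (G (p ^ (k₀ + 1)))
    have hB := (hℓ (d * p ^ k₀) (Nat.mul_pos hd (pow_pos hp.pos _))).const_mul (G p)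
    have := (hA.sub hB).const_mul (D⁻¹)
    exact this.congr fun N => (hTid N).symm
  have hTp : Tendsto (fun N : ℕ => Tn G p d (N / p)) atTop (nhds τ) :=
    hT.comp (tendsto_nat_div hp.pos)
  refine ⟨τ, fun k => ?_⟩
  have h1 : Tendsto (fun N : ℕ => LSn G (d * p ^ k) N) atTop (nhds (ℓ (d * p ^ k))) :=
    hℓ _ (Nat.mul_pos hd (pow_pos hp.pos _))
  have h2 : Tendsto (fun N : ℕ => LSn G (d * p ^ k) N) atTop
      (nhds (G (p ^ k) * τ - G (p ^ (k + 1)) * τ)) := by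
    have := (hT.const_mul (G (p ^ k))).sub (hTp.const_mul (G (p ^ (k + 1))))
    exact this.congr fun N => (split G hG hp hd hpd k N).symm
  have := tendsto_nhds_unique h1 h2
  rw [this]
  ring
lemma cmIndex_eq_top (G : ℕ → ℂ) {p : ℕ} (h : ∀ k : ℕ, G (p ^ k) = (G p) ^ k) :
    cmIndex G p = ⊤ := by
  rw [cmIndex]
  rw [iSup_eq_top]
  intro b hb
  obtain ⟨m, rfl⟩ := WithTop.ne_top_iff_exists.1 hb.ne |>.imp fun m hm => hm.symm
  refine ⟨m + 1, ?_⟩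
  have hmem : (m + 1) ∈ {n : ℕ | ∀ k : ℕ, 1 ≤ k → k ≤ n → G (p ^ k) = G p ^ k} :=
    fun k _ _ => h k
  rw [iSup_pos hmem]
  exact Nat.cast_lt.2 (Nat.lt_succ_self m)

lemma cmIndex_ne_top (G : ℕ → ℂ) {p : ℕ} {k₁ : ℕ} (hk₁ : 1 ≤ k₁)
    (h : G (p ^ k₁) ≠ (G p) ^ k₁) : cmIndex G p ≠ ⊤ := by
  intro htop
  have hle : cmIndex G p ≤ ((k₁ - 1 : ℕ) : ℕ∞) := by
    rw [cmIndex]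
    refine iSup₂_le fun w hw => ?_
    have hwlt : w ≤ k₁ - 1 := by
      by_contra hc
      exact h (hw k₁ hk₁ (by omega))
    exact_mod_cast hwlt
  rw [htop] at hle
  exact (lt_irrefl _ (lt_of_le_of_lt hle (WithTop.coe_lt_top _)))

lemma trIdx_eq (G : ℕ → ℂ) {p v : ℕ} (h1 : ∀ K : ℕ, K < v → G (p ^ (K + 1)) = 1)
    (h2 : G (p ^ (v + 1)) ≠ 1) : trIdx G p = (v : ℕ∞) := by
  rw [trIdx]
  apply le_antisymm
  · exact iInf₂_le v h2
  · refine le_iInf₂ fun K hK => ?_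
    have : v ≤ K := by
      by_contra hc
      exact hK (h1 K (by omega))
    exact_mod_cast this

lemma coprime_prod_primepow {p : ℕ} (hp : p.Prime) {s : Finset ℕ}
    (hs : ∀ q ∈ s, q.Prime ∧ q ≠ p) (e : ℕ → ℕ) :
    Nat.Coprime p (∏ q ∈ s, q ^ e q) :=
  Nat.Coprime.prod_right fun q hq =>
    (((Nat.coprime_primes hp (hs q hq).1).2 (Ne.symm (hs q hq).2))).pow_right _

lemma G_prod_primepow (G : ℕ → ℂ) (hG : IsMult G) (hG1 : G 1 = 1) (e : ℕ → ℕ) :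
    ∀ s : Finset ℕ, (∀ q ∈ s, q.Prime) →
    G (∏ q ∈ s, q ^ e q) = ∏ q ∈ s, G (q ^ e q) := by
  classical
  intro s
  induction s using Finset.induction_on with
  | empty => intro _; simpa using hG1
  | @insert a s ha ih =>
    intro hs
    have hap : a.Prime := hs a (Finset.mem_insert_self a s)
    have hsp : ∀ q ∈ s, q.Prime := fun q hq => hs q (Finset.mem_insert_of_mem hq)
    rw [Finset.prod_insert ha, Finset.prod_insert ha, ← ih hsp]
    have hcop : Nat.Coprime (a ^ e a) (∏ q ∈ s, q ^ e q) :=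
      Nat.Coprime.pow_left _ (coprime_prod_primepow hap
        (fun q hq => ⟨hsp q hq, fun h => ha (h ▸ hq)⟩) e)
    exact hG _ _ (pow_pos hap.pos _) (Finset.prod_pos fun q hq => pow_pos (hsp q hq).pos _) hcop
lemma transpCond_eq (G : ℕ → ℂ) (hfinS : {q : ℕ | IsSimplyTransparent G q}.Finite) :
    transpCond G = ∏ q ∈ hfinS.toFinset, q ^ (trIdx G q).toNat :=
  finprod_mem_eq_finite_toFinset_prod _ hfinS

lemma member_facts (G : ℕ → ℂ) (hG1 : G 1 = 1) {q : ℕ} (hq : IsSimplyTransparent G q) :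
    (∀ j : ℕ, j ≤ (trIdx G q).toNat → G (q ^ j) = 1)
      ∧ G (q ^ ((trIdx G q).toNat + 1)) ≠ 1 := by
  obtain ⟨hqp, hq1, hqc⟩ := hq
  have hex : ∃ K : ℕ, G (q ^ (K + 1)) ≠ 1 := by
    by_contra hc
    push_neg at hc
    refine hqc (cmIndex_eq_top G fun k => ?_)
    cases k with
    | zero => simpa using hG1
    | succ n => rw [hc n, hq1, one_pow]
  have h2 := Nat.find_spec hex
  have h1 : ∀ K : ℕ, K < Nat.find hex → G (q ^ (K + 1)) = 1 :=
    fun K hK => not_not.1 (Nat.find_min hex hK)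
  have htr : trIdx G q = ((Nat.find hex : ℕ) : ℕ∞) := trIdx_eq G h1 h2
  rw [htr, ENat.toNat_coe]
  refine ⟨fun j hj => ?_, h2⟩
  cases j with
  | zero => simpa using hG1
  | succ K => exact h1 K (by omega)

lemma core_spec (G : ℕ → ℂ) (hG : IsMult G) (hG1 : G 1 = 1)
    (hfinS : {q : ℕ | IsSimplyTransparent G q}.Finite)
    {p v : ℕ} (hp : p.Prime) (hv1 : ∀ j : ℕ, j ≤ v → G (p ^ j) = 1)
    (hv2 : G (p ^ (v + 1)) ≠ 1) :
    G (p * transpCond G) = G (p ^ (v + 1)) := by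
  classical
  set s := hfinS.toFinset with hsdef
  have hsprime : ∀ q ∈ s, q.Prime := fun q hq => (hfinS.mem_toFinset.1 hq).1
  have hNT := transpCond_eq G hfinS
  by_cases hv0 : v = 0
  · -- p is not simply transparent since G p ≠ 1
    subst hv0
    have hGp : G p ≠ 1 := by simpa using hv2
    have hps : p ∉ s := fun h => hGp (hfinS.mem_toFinset.1 h).2.1
    have hcop : Nat.Coprime p (∏ q ∈ s, q ^ (trIdx G q).toNat) :=
      coprime_prod_primepow hp (fun q hq => ⟨hsprime q hq, fun h => hps (h ▸ hq)⟩) _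
    rw [hNT, hG _ _ hp.pos (Finset.prod_pos fun q hq => pow_pos (hsprime q hq).pos _) hcop,
      G_prod_primepow G hG hG1 _ s hsprime]
    have hone : ∀ q ∈ s, G (q ^ (trIdx G q).toNat) = 1 := fun q hq =>
      (member_facts G hG1 (hfinS.mem_toFinset.1 hq)).1 _ le_rfl
    rw [Finset.prod_congr rfl hone]
    simp [pow_one]
  · -- p is simply transparent with index v
    have hv1' : 1 ≤ v := Nat.one_le_iff_ne_zero.2 hv0
    have hGp : G p = 1 := by simpa using hv1 1 hv1'
    have hne : G (p ^ (v + 1)) ≠ (G p) ^ (v + 1) := by rw [hGp, one_pow]; exact hv2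
    have hst : IsSimplyTransparent G p := ⟨hp, hGp, cmIndex_ne_top G (by omega) hne⟩
    have hps : p ∈ s := hfinS.mem_toFinset.2 hst
    have htr : trIdx G p = (v : ℕ∞) :=
      trIdx_eq G (fun K hK => hv1 (K + 1) (by omega)) hv2
    have hsplit : ∏ q ∈ s, q ^ (trIdx G q).toNat
        = p ^ v * ∏ q ∈ s.erase p, q ^ (trIdx G q).toNat := by
      rw [← Finset.mul_prod_erase s _ hps, htr, ENat.toNat_coe]
    have herase : ∀ q ∈ s.erase p, q.Prime ∧ q ≠ p := fun q hq =>
      ⟨hsprime q (Finset.mem_of_mem_erase hq), Finset.ne_of_mem_erase hq⟩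
    have hcop : Nat.Coprime (p ^ (v + 1)) (∏ q ∈ s.erase p, q ^ (trIdx G q).toNat) :=
      Nat.Coprime.pow_left _ (coprime_prod_primepow hp herase _)
    have harith : p * (p ^ v * ∏ q ∈ s.erase p, q ^ (trIdx G q).toNat)
        = p ^ (v + 1) * ∏ q ∈ s.erase p, q ^ (trIdx G q).toNat := by ring
    rw [hNT, hsplit, harith,
      hG _ _ (pow_pos hp.pos _)
        (Finset.prod_pos fun q hq => pow_pos (herase q hq).1.pos _) hcop,
      G_prod_primepow G hG hG1 _ _ (fun q hq => (herase q hq).1)]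
    have hone : ∀ q ∈ s.erase p, G (q ^ (trIdx G q).toNat) = 1 := fun q hq =>
      (member_facts G hG1 (hfinS.mem_toFinset.1 (Finset.mem_of_mem_erase hq))).1 _ le_rfl
    rw [Finset.prod_congr rfl hone]
    simp

lemma core_spec_all_one (G : ℕ → ℂ) (hG : IsMult G) (hG1 : G 1 = 1)
    (hfinS : {q : ℕ | IsSimplyTransparent G q}.Finite)
    {p : ℕ} (hp : p.Prime) (hall : ∀ k : ℕ, G (p ^ k) = 1) :
    G (p * transpCond G) = 1 := by
  classical
  set s := hfinS.toFinset with hsdef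
  have hsprime : ∀ q ∈ s, q.Prime := fun q hq => (hfinS.mem_toFinset.1 hq).1
  have hNT := transpCond_eq G hfinS
  have hGp : G p = 1 := by simpa using hall 1
  have hps : p ∉ s := by
    intro h
    refine (hfinS.mem_toFinset.1 h).2.2 (cmIndex_eq_top G fun k => ?_)
    rw [hall k, hGp, one_pow]
  have hcop : Nat.Coprime p (∏ q ∈ s, q ^ (trIdx G q).toNat) :=
    coprime_prod_primepow hp (fun q hq => ⟨hsprime q hq, fun h => hps (h ▸ hq)⟩) _
  rw [hNT, hG _ _ hp.pos (Finset.prod_pos fun q hq => pow_pos (hsprime q hq).pos _) hcop,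
    G_prod_primepow G hG hG1 _ s hsprime]
  have hone : ∀ q ∈ s, G (q ^ (trIdx G q).toNat) = 1 := fun q hq =>
    (member_facts G hG1 (hfinS.mem_toFinset.1 hq)).1 _ le_rfl
  rw [Finset.prod_congr rfl hone, hGp]
  simp
lemma finS_of_finBad {G : ℕ → ℂ} (hfin : {p : ℕ | p.Prime ∧ IsBad G p}.Finite) :
    {q : ℕ | IsSimplyTransparent G q}.Finite := by
  refine hfin.subset fun q hq => ?_
  obtain ⟨hqp, hq1, -⟩ := hq
  refine ⟨hqp, ?_, ?_⟩
  · rw [hq1]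
    simp
  · rw [hq1]
    simp only [norm_one]
    exact_mod_cast hqp.one_lt.le

section PrimeEq

variable {G₁ G₂ : ℕ → ℂ} {ℓ : ℕ → ℂ} {p d₀ : ℕ}

lemma helperPP (hG₁ : IsMult G₁) (hG₂ : IsMult G₂) (h11 : G₁ 1 = 1) (h21 : G₂ 1 = 1)
    (hℓ₁ : ∀ n : ℕ, 0 < n → Tendsto (fun N : ℕ => LSn G₁ n N) atTop (nhds (ℓ n)))
    (hℓ₂ : ∀ n : ℕ, 0 < n → Tendsto (fun N : ℕ => LSn G₂ n N) atTop (nhds (ℓ n)))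
    (hp : p.Prime) (hd₀ : 0 < d₀) (hpd₀ : ¬ p ∣ d₀) {k₁ : ℕ} (hk₁ : ℓ (d₀ * p ^ k₁) ≠ 0)
    (hP₁ : ∀ k : ℕ, G₁ (p ^ (k + 1)) = G₁ p * G₁ (p ^ k))
    (hP₂ : ∀ k : ℕ, G₂ (p ^ (k + 1)) = G₂ p * G₂ (p ^ k)) :
    ∀ k : ℕ, G₁ (p ^ k) = G₂ (p ^ k) := by
  have hgeo₁ := fun k => geo_ell G₁ hG₁ hp h11 hℓ₁ hP₁ hd₀ hpd₀ k
  have hgeo₂ := fun k => geo_ell G₂ hG₂ hp h21 hℓ₂ hP₂ hd₀ hpd₀ k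
  have hld₀ : ℓ d₀ ≠ 0 := by
    intro h
    rw [hgeo₁ k₁, h, mul_zero] at hk₁
    exact hk₁ rfl
  have hc : G₁ p = G₂ p := by
    have h1 := hgeo₁ 1
    have h2 := hgeo₂ 1
    rw [h1] at h2
    simpa [pow_one] using mul_right_cancel₀ hld₀ h2
  intro k
  rw [pow_of_P G₁ h11 hP₁, pow_of_P G₂ h21 hP₂, hc]

lemma helperLL (hG₁ : IsMult G₁) (hG₂ : IsMult G₂) (h11 : G₁ 1 = 1) (h21 : G₂ 1 = 1)
    (hfinS₁ : {q : ℕ | IsSimplyTransparent G₁ q}.Finite)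
    (hfinS₂ : {q : ℕ | IsSimplyTransparent G₂ q}.Finite)
    (hℓ₁ : ∀ n : ℕ, 0 < n → Tendsto (fun N : ℕ => LSn G₁ n N) atTop (nhds (ℓ n)))
    (hℓ₂ : ∀ n : ℕ, 0 < n → Tendsto (fun N : ℕ => LSn G₂ n N) atTop (nhds (ℓ n)))
    (hp : p.Prime) (hd₀ : 0 < d₀) (hpd₀ : ¬ p ∣ d₀) {k₁ : ℕ} (hk₁ : ℓ (d₀ * p ^ k₁) ≠ 0)
    (hcorep : G₁ (p * transpCond G₁) = G₂ (p * transpCond G₂))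
    (hP₁ : ¬ ∀ k : ℕ, G₁ (p ^ (k + 1)) = G₁ p * G₁ (p ^ k))
    (hP₂ : ¬ ∀ k : ℕ, G₂ (p ^ (k + 1)) = G₂ p * G₂ (p ^ k)) :
    ∀ k : ℕ, G₁ (p ^ k) = G₂ (p ^ k) := by
  classical
  obtain ⟨k₀₁, hk₀₁⟩ := not_forall.1 hP₁
  obtain ⟨k₀₂, hk₀₂⟩ := not_forall.1 hP₂
  obtain ⟨τ₁, hτ₁⟩ := lin_ell G₁ hG₁ hp h11 hℓ₁ hk₀₁ hd₀ hpd₀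
  obtain ⟨τ₂, hτ₂⟩ := lin_ell G₂ hG₂ hp h21 hℓ₂ hk₀₂ hd₀ hpd₀
  have hτ₁ne : τ₁ ≠ 0 := by
    intro h
    rw [hτ₁ k₁, h, mul_zero] at hk₁
    exact hk₁ rfl
  have hτ₂ne : τ₂ ≠ 0 := by
    intro h
    rw [hτ₂ k₁, h, mul_zero] at hk₁
    exact hk₁ rfl
  have hexv : ∃ k : ℕ, ℓ (d₀ * p ^ k) ≠ 0 := ⟨k₁, hk₁⟩
  set v := Nat.find hexv with hvdef
  have hv : ℓ (d₀ * p ^ v) ≠ 0 := Nat.find_spec hexv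
  have hv0 : ∀ k : ℕ, k < v → ℓ (d₀ * p ^ k) = 0 := fun k hk => not_not.1 (Nat.find_min hexv hk)
  -- G₁ is ≡ 1 up to v
  have haone : ∀ j : ℕ, j ≤ v → G₁ (p ^ j) = 1 := by
    intro j
    induction j with
    | zero => intro _; simpa using h11
    | succ j ih =>
      intro hj
      have hjv : j < v := by omega
      have h0 := hv0 j hjv
      rw [hτ₁ j] at h0
      have := (mul_eq_zero.1 h0).resolve_right hτ₁ne
      have hGj := ih (by omega)
      rw [hGj] at this
      have : G₁ (p ^ (j + 1)) = 1 := by linear_combination -this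
      exact this
  have hbone : ∀ j : ℕ, j ≤ v → G₂ (p ^ j) = 1 := by
    intro j
    induction j with
    | zero => intro _; simpa using h21
    | succ j ih =>
      intro hj
      have hjv : j < v := by omega
      have h0 := hv0 j hjv
      rw [hτ₂ j] at h0
      have := (mul_eq_zero.1 h0).resolve_right hτ₂ne
      have hGj := ih (by omega)
      rw [hGj] at this
      have : G₂ (p ^ (j + 1)) = 1 := by linear_combination -this
      exact this
  have hv2a : G₁ (p ^ (v + 1)) ≠ 1 := by
    intro h
    rw [hτ₁ v, haone v le_rfl, h, sub_self, zero_mul] at hv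
    exact hv rfl
  have hv2b : G₂ (p ^ (v + 1)) ≠ 1 := by
    intro h
    rw [hτ₂ v, hbone v le_rfl, h, sub_self, zero_mul] at hv
    exact hv rfl
  have hcore₁ := core_spec G₁ hG₁ h11 hfinS₁ hp haone hv2a
  have hcore₂ := core_spec G₂ hG₂ h21 hfinS₂ hp hbone hv2b
  have hvv : G₁ (p ^ (v + 1)) = G₂ (p ^ (v + 1)) := by
    rw [← hcore₁, ← hcore₂, hcorep]
  have hττ : τ₁ = τ₂ := by
    have h1 := hτ₁ v
    have h2 := hτ₂ v
    rw [haone v le_rfl] at h1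
    rw [hbone v le_rfl, ← hvv] at h2
    have hsub : (1 - G₁ (p ^ (v + 1))) ≠ 0 := sub_ne_zero.2 (Ne.symm hv2a)
    have := h1.symm.trans h2
    exact mul_left_cancel₀ hsub this
  intro k
  induction k with
  | zero => simp only [pow_zero]; rw [h11, h21]
  | succ k ih =>
    have h1 := hτ₁ k
    have h2 := hτ₂ k
    rw [hττ] at h1
    have := h1.symm.trans h2
    have hdiff := mul_right_cancel₀ hτ₂ne this
    rw [ih] at hdiff
    linear_combination -hdiff

lemma helperPL (hG₁ : IsMult G₁) (hG₂ : IsMult G₂) (h11 : G₁ 1 = 1) (h21 : G₂ 1 = 1)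
    (hfinS₁ : {q : ℕ | IsSimplyTransparent G₁ q}.Finite)
    (hfinS₂ : {q : ℕ | IsSimplyTransparent G₂ q}.Finite)
    (hℓ₁ : ∀ n : ℕ, 0 < n → Tendsto (fun N : ℕ => LSn G₁ n N) atTop (nhds (ℓ n)))
    (hℓ₂ : ∀ n : ℕ, 0 < n → Tendsto (fun N : ℕ => LSn G₂ n N) atTop (nhds (ℓ n)))
    (hp : p.Prime) (hd₀ : 0 < d₀) (hpd₀ : ¬ p ∣ d₀) {k₁ : ℕ} (hk₁ : ℓ (d₀ * p ^ k₁) ≠ 0)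
    (hcorep : G₁ (p * transpCond G₁) = G₂ (p * transpCond G₂))
    (hP₁ : ∀ k : ℕ, G₁ (p ^ (k + 1)) = G₁ p * G₁ (p ^ k))
    (hP₂ : ¬ ∀ k : ℕ, G₂ (p ^ (k + 1)) = G₂ p * G₂ (p ^ k)) :
    ∀ k : ℕ, G₁ (p ^ k) = G₂ (p ^ k) := by
  classical
  set c := G₁ p with hcdef
  have hgeo₁ := fun k => geo_ell G₁ hG₁ hp h11 hℓ₁ hP₁ hd₀ hpd₀ k
  obtain ⟨k₀₂, hk₀₂⟩ := not_forall.1 hP₂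
  obtain ⟨τ₂, hτ₂⟩ := lin_ell G₂ hG₂ hp h21 hℓ₂ hk₀₂ hd₀ hpd₀
  have hτ₂ne : τ₂ ≠ 0 := by
    intro h
    rw [hτ₂ k₁, h, mul_zero] at hk₁
    exact hk₁ rfl
  have hld₀ : ℓ d₀ ≠ 0 := by
    intro h
    rw [hgeo₁ k₁, h, mul_zero] at hk₁
    exact hk₁ rfl
  -- k = 0 instance for G₂ : ℓ d₀ = (1 - G₂ p) τ₂
  have h20 := hτ₂ 0
  simp only [pow_zero, mul_one, zero_add, pow_one, h21] at h20
  have hb1 : G₂ p ≠ 1 := by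
    intro h
    rw [h, sub_self, zero_mul] at h20
    exact hld₀ h20
  -- core value of G₂ : with v = 0
  have hcore₂ : G₂ (p * transpCond G₂) = G₂ (p ^ 1) := by
    have := core_spec G₂ hG₂ h21 hfinS₂ hp (v := 0)
      (fun j hj => by interval_cases j; simpa using h21)
      (by rw [zero_add, pow_one]; exact hb1)
    simpa using this
  -- c ≠ 1
  have hc1 : c ≠ 1 := by
    intro h
    have hall : ∀ k : ℕ, G₁ (p ^ k) = 1 := by
      intro k
      rw [pow_of_P G₁ h11 hP₁, ← hcdef, h, one_pow]
    have hcore₁ := core_spec_all_one G₁ hG₁ h11 hfinS₁ hp hall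
    rw [hcore₁, hcore₂, pow_one] at hcorep
    exact hb1 hcorep.symm
  -- core value of G₁ : with v = 0
  have hcore₁ : G₁ (p * transpCond G₁) = G₁ (p ^ 1) := by
    have := core_spec G₁ hG₁ h11 hfinS₁ hp (v := 0)
      (fun j hj => by interval_cases j; simpa using h11)
      (by rw [zero_add, pow_one]; exact hc1)
    simpa using this
  have hcb : G₂ p = c := by
    rw [hcore₁, hcore₂] at hcorep
    simp only [pow_one] at hcorep
    exact hcorep.symm
  -- ℓ d₀ = (1 - c) τ₂
  rw [hcb] at h20
  -- show G₂ (p ^ k) = c ^ k by induction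
  have hbk : ∀ k : ℕ, G₂ (p ^ k) = c ^ k := by
    intro k
    induction k with
    | zero => simp only [pow_zero]; rw [h21]
    | succ k ih =>
      have h2 := hτ₂ k
      rw [hgeo₁ k, h20, ih] at h2
      have : c ^ k * ((1 - c) * τ₂) = (c ^ k - G₂ (p ^ (k + 1))) * τ₂ := h2
      have hlin := mul_right_cancel₀ hτ₂ne (by linear_combination this :
        (c ^ k * (1 - c)) * τ₂ = (c ^ k - G₂ (p ^ (k + 1))) * τ₂)
      have : G₂ (p ^ (k + 1)) = c ^ k - c ^ k * (1 - c) := by linear_combination hlin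
      rw [this]
      ring
  intro k
  rw [pow_of_P G₁ h11 hP₁, ← hcdef, hbk k]

lemma prime_eq (hG₁ : IsMult G₁) (hG₂ : IsMult G₂) (h11 : G₁ 1 = 1) (h21 : G₂ 1 = 1)
    (hfinS₁ : {q : ℕ | IsSimplyTransparent G₁ q}.Finite)
    (hfinS₂ : {q : ℕ | IsSimplyTransparent G₂ q}.Finite)
    (hℓ₁ : ∀ n : ℕ, 0 < n → Tendsto (fun N : ℕ => LSn G₁ n N) atTop (nhds (ℓ n)))
    (hℓ₂ : ∀ n : ℕ, 0 < n → Tendsto (fun N : ℕ => LSn G₂ n N) atTop (nhds (ℓ n)))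
    (hp : p.Prime) {n₀ : ℕ} (hn₀ : 0 < n₀) (hℓn₀ : ℓ n₀ ≠ 0)
    (hcorep : G₁ (p * transpCond G₁) = G₂ (p * transpCond G₂)) :
    ∀ k : ℕ, G₁ (p ^ k) = G₂ (p ^ k) := by
  set k₁ := n₀.factorization p with hk₁def
  set d₀ := n₀ / p ^ k₁ with hd₀def
  have hd₀ : 0 < d₀ := Nat.ordCompl_pos p hn₀.ne'
  have hpd₀ : ¬ p ∣ d₀ := Nat.not_dvd_ordCompl hp hn₀.ne'
  have hfact : d₀ * p ^ k₁ = n₀ := by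
    rw [mul_comm]
    exact Nat.ordProj_mul_ordCompl_eq_self n₀ p
  have hk₁ : ℓ (d₀ * p ^ k₁) ≠ 0 := by rw [hfact]; exact hℓn₀
  by_cases hP₁ : ∀ k : ℕ, G₁ (p ^ (k + 1)) = G₁ p * G₁ (p ^ k)
  · by_cases hP₂ : ∀ k : ℕ, G₂ (p ^ (k + 1)) = G₂ p * G₂ (p ^ k)
    · exact helperPP hG₁ hG₂ h11 h21 hℓ₁ hℓ₂ hp hd₀ hpd₀ hk₁ hP₁ hP₂
    · exact helperPL hG₁ hG₂ h11 h21 hfinS₁ hfinS₂ hℓ₁ hℓ₂ hp hd₀ hpd₀ hk₁ hcorep hP₁ hP₂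
  · by_cases hP₂ : ∀ k : ℕ, G₂ (p ^ (k + 1)) = G₂ p * G₂ (p ^ k)
    · intro k
      exact (helperPL hG₂ hG₁ h21 h11 hfinS₂ hfinS₁ hℓ₂ hℓ₁ hp hd₀ hpd₀ hk₁ hcorep.symm
        hP₂ hP₁ k).symm
    · exact helperLL hG₁ hG₂ h11 h21 hfinS₁ hfinS₂ hℓ₁ hℓ₂ hp hd₀ hpd₀ hk₁ hcorep hP₁ hP₂

end PrimeEq

lemma G_one' (G F : ℕ → ℂ) (hG : IsMult G) (hconv : ∀ a : ℕ, 0 < a → RTendsto G a (F a))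
    {a₀ : ℕ} (ha₀ : 0 < a₀) (hFa₀ : F a₀ ≠ 0) : G 1 = 1 := by
  rcases G_one G hG with h | h
  · exact h
  · exfalso
    have hzero : ∀ N : ℕ, RSn G a₀ N = 0 := by
      intro N
      refine Finset.sum_eq_zero fun q hq => ?_
      simp only [Finset.mem_Icc] at hq
      rw [h q (by omega), zero_mul]
    have h1 : Tendsto (fun N : ℕ => RSn G a₀ N) atTop (nhds (F a₀)) :=
      rtendsto_nat (hconv a₀ ha₀)
    have h2 : Tendsto (fun N : ℕ => RSn G a₀ N) atTop (nhds 0) := by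
      refine tendsto_const_nhds.congr fun N => (hzero N).symm
    exact hFa₀ (tendsto_nhds_unique h1 h2)

end Rigidity

/-- **Rigidity** (Theorem 9.3): a multiplicative Ramanujan coefficient of a non-null
function is determined by its opacity core. -/
theorem stmt_5 (F : ℕ → ℂ) (hF : ∃ a : ℕ, 0 < a ∧ F a ≠ 0)
    (G₁ G₂ : ℕ → ℂ) (hG₁ : IsMult G₁) (hG₂ : IsMult G₂)
    (hfin₁ : {p : ℕ | p.Prime ∧ IsBad G₁ p}.Finite)
    (hfin₂ : {p : ℕ | p.Prime ∧ IsBad G₂ p}.Finite)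
    (hconv₁ : ∀ a : ℕ, 0 < a → RTendsto G₁ a (F a))
    (hconv₂ : ∀ a : ℕ, 0 < a → RTendsto G₂ a (F a))
    (hcore : ∀ q : ℕ, 0 < q → opacityCore G₁ q = opacityCore G₂ q) :
    ∀ n : ℕ, 0 < n → G₁ n = G₂ n := by
  classical
  obtain ⟨a₀, ha₀, hFa₀⟩ := hF
  have h11 : G₁ 1 = 1 := Rigidity.G_one' G₁ F hG₁ hconv₁ ha₀ hFa₀
  have h21 : G₂ 1 = 1 := Rigidity.G_one' G₂ F hG₂ hconv₂ ha₀ hFa₀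
  have hfinS₁ := Rigidity.finS_of_finBad hfin₁
  have hfinS₂ := Rigidity.finS_of_finBad hfin₂
  obtain ⟨ℓ₁, hℓ₁t, hℓ₁F⟩ := Rigidity.exists_ell G₁ F hconv₁
  obtain ⟨ℓ₂, hℓ₂t, hℓ₂F⟩ := Rigidity.exists_ell G₂ F hconv₂
  have huniq : ∀ n : ℕ, 0 < n → ℓ₁ n = ℓ₂ n := Rigidity.ell_unique hℓ₁F hℓ₂F
  have hℓ₂t' : ∀ n : ℕ, 0 < n → Tendsto (fun N : ℕ => Rigidity.LSn G₂ n N) atTop (nhds (ℓ₁ n)) := by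
    intro n hn
    rw [huniq n hn]
    exact hℓ₂t n hn
  -- a nonzero value of ℓ₁
  have hex : ∃ d ∈ a₀.divisors, (d : ℂ) * ℓ₁ d ≠ 0 := by
    by_contra hc
    push_neg at hc
    exact hFa₀ ((hℓ₁F a₀ ha₀).trans (Finset.sum_eq_zero hc))
  obtain ⟨n₀, hn₀mem, hn₀ne⟩ := hex
  have hn₀pos : 0 < n₀ := Nat.pos_of_mem_divisors hn₀mem
  have hℓn₀ : ℓ₁ n₀ ≠ 0 := fun h => hn₀ne (by rw [h, mul_zero])
  -- prime power equality
  have hpk : ∀ p : ℕ, p.Prime → ∀ k : ℕ, G₁ (p ^ k) = G₂ (p ^ k) := by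
    intro p hp
    have hcorep : G₁ (p * transpCond G₁) = G₂ (p * transpCond G₂) := by
      have h := hcore p hp.pos
      rw [opacityCore, opacityCore, Rigidity.mu_prime hp] at h
      have hsq : (-1 : ℂ) ^ 2 = 1 := by ring
      rw [hsq, mul_one, mul_one] at h
      exact h
    exact Rigidity.prime_eq hG₁ hG₂ h11 h21 hfinS₁ hfinS₂ hℓ₁t hℓ₂t' hp hn₀pos hℓn₀ hcorep
  -- conclude by strong induction on n
  intro n
  induction n using Nat.strong_induction_on with
  | _ n IH =>
    intro hn
    by_cases hn1 : n = 1
    · rw [hn1, h11, h21]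
    · set p := n.minFac with hpdef
      have hp : p.Prime := Nat.minFac_prime hn1
      set k := n.factorization p with hkdef
      set m := n / p ^ k with hmdef
      have hfact : p ^ k * m = n := Nat.ordProj_mul_ordCompl_eq_self n p
      have hmpos : 0 < m := Nat.ordCompl_pos p hn.ne'
      have hpm : ¬ p ∣ m := Nat.not_dvd_ordCompl hp hn.ne'
      have hkpos : 0 < k := by
        rw [hkdef]
        exact Nat.Prime.factorization_pos_of_dvd hp hn.ne' (Nat.minFac_dvd n)
      have hppow : 1 < p ^ k := Nat.one_lt_pow hkpos.ne' hp.one_lt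
      have hmlt : m < n := by
        rw [hmdef]
        exact Nat.div_lt_self hn hppow
      have hcop : Nat.Coprime (p ^ k) m :=
        Nat.Coprime.pow_left _ ((hp.coprime_iff_not_dvd).2 hpm)
      calc G₁ n = G₁ (p ^ k * m) := by rw [hfact]
        _ = G₁ (p ^ k) * G₁ m := hG₁ _ _ (pow_pos hp.pos _) hmpos hcop
        _ = G₂ (p ^ k) * G₂ m := by rw [hpk p hp k, IH m hmlt hmpos]
        _ = G₂ (p ^ k * m) := (hG₂ _ _ (pow_pos hp.pos _) hmpos hcop).symm
        _ = G₂ n := by rw [hfact]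
end
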